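/- arXiv:1405.1492 — 9 statements merged into one kernel-verified Lean document; each statement's English description precedes it below -/
import Mathlib

section
/- Let A be an n×n integer matrix with det A = ±1 whose characteristic polynomial p_A is irreducible over ℚ, let λ be a root of p_A, and let F = ℚ(λ) be the resulting number field with ring of integers 𝓞_F. Then the centralizer C(A) = {B ∈ GL(n,ℤ) : AB = BA} is isomorphic, as a group, to a finite-index subgroup of the unit group 𝓞_F^×; that is, there is an injective group homomorphism from C(A) into 𝓞_F^× whose image has finite index in 𝓞_F^×. -/
open Matrix Polynomial NumberField

set_option maxHeartbeats 1000000 in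
set_option synthInstance.maxHeartbeats 200000 in
/-- **Baake–Roberts.** If `A ∈ GL(n, ℤ)` has irreducible characteristic polynomial over `ℚ`,
`λ` is a root of it generating the number field `F = ℚ(λ)`, then the centralizer
`C(A) = {B ∈ GL(n, ℤ) : AB = BA}` is isomorphic to a finite-index subgroup of the unit
group `𝓞_F^×`: there is an injective group homomorphism from `C(A)` into `𝓞_F^×` whose
range has finite index. (Here `GL(n, ℤ)` is realized as the unit group of the ring of
`n × n` integer matrices, so membership is exactly `det = ±1`, and `hA.unit` is `A` as
such a unit.) -/
theorem centralizer_iso_finite_index_subgroup_of_units (n : ℕ)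
    (A : Matrix (Fin n) (Fin n) ℤ) (hA : IsUnit A)
    (hdet : A.det = 1 ∨ A.det = -1)
    (hirr : Irreducible (A.charpoly.map (Int.castRingHom ℚ)))
    (K : Type) [Field K] [NumberField K] (lam : K)
    (hroot : Polynomial.aeval lam A.charpoly = 0)
    (hgen : IntermediateField.adjoin ℚ {lam} = ⊤) :
    ∃ φ : Subgroup.centralizer {hA.unit} →* (𝓞 K)ˣ,
      Function.Injective φ ∧ φ.range.FiniteIndex := by
  classical
  set p : Polynomial ℤ := A.charpoly with hp
  set pQ : Polynomial ℚ := p.map (Int.castRingHom ℚ) with hpQ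
  have hmonic : pQ.Monic := (Matrix.charpoly_monic A).map _
  have hcast : (Int.castRingHom ℚ) = algebraMap ℤ ℚ := rfl
  have hdegQ : pQ.natDegree = n := by
    rw [hpQ, (Matrix.charpoly_monic A).natDegree_map,
      show p.natDegree = A.charpoly.natDegree from rfl,
      Matrix.charpoly_natDegree_eq_dim, Fintype.card_fin]
  have hn : 0 < n := hdegQ ▸ hirr.natDegree_pos
  haveI : Nonempty (Fin n) := ⟨⟨0, hn⟩⟩
  have hrootQ : aeval lam pQ = 0 := by
    rw [hpQ, hcast, aeval_map_algebraMap]; exact hroot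
  have hint : IsIntegral ℚ lam := ⟨pQ, hmonic, hrootQ⟩
  have hmin : minpoly ℚ lam = pQ := (minpoly.eq_of_irreducible_of_monic hirr hrootQ hmonic).symm
  -- the power basis of `K` over `ℚ` with generator `lam`
  let e : (IntermediateField.adjoin ℚ ({lam} : Set K)) ≃ₐ[ℚ] K :=
    (IntermediateField.equivOfEq hgen).trans IntermediateField.topEquiv
  let pb : PowerBasis ℚ K := (IntermediateField.adjoin.powerBasis hint).map e
  have hpbgen : pb.gen = lam := rfl
  -- the coefficient embedding of matrices
  let ψ : Matrix (Fin n) (Fin n) ℤ →+* Matrix (Fin n) (Fin n) ℚ := (Int.castRingHom ℚ).mapMatrix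
  have hψ : ∀ (X : Matrix (Fin n) (Fin n) ℤ) i j, ψ X i j = (X i j : ℚ) := fun X i j => rfl
  have hψinj : Function.Injective ψ := by
    intro X Y h
    ext i j
    have h2 := congrFun (congrFun h i) j
    rw [hψ, hψ] at h2
    exact_mod_cast h2
  set Aq : Matrix (Fin n) (Fin n) ℚ := ψ A with hAq
  have hCH : aeval Aq pQ = 0 := by
    rw [hpQ, hcast, aeval_map_algebraMap]
    have h1 : Aq = ψ.toIntAlgHom A := rfl
    rw [h1, aeval_algHom_apply, hp, Matrix.aeval_self_charpoly, map_zero]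
  -- the algebra map `f : K → Matrix` sending `lam` to `Aq`
  let f : K →ₐ[ℚ] Matrix (Fin n) (Fin n) ℚ := pb.lift Aq (by rw [hpbgen, hmin]; exact hCH)
  have hflam : f lam = Aq := by rw [← hpbgen]; exact pb.lift_gen _ _
  haveI : Nontrivial (Matrix (Fin n) (Fin n) ℚ) := by
    refine ⟨0, 1, fun h => ?_⟩
    have := congrFun (congrFun h ⟨0, hn⟩) ⟨0, hn⟩
    simp [Matrix.one_apply] at this
  have hfinj : Function.Injective f := f.toRingHom.injective
  -- anything commuting with `Aq` commutes with the image of `f`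
  have hcommf : ∀ (B : Matrix (Fin n) (Fin n) ℚ), Commute B Aq → ∀ c : K, Commute B (f c) := by
    intro B hB c
    obtain ⟨q, hq⟩ := pb.exists_eq_aeval' c
    have h1 : f c = aeval Aq q := by
      rw [hq, hpbgen, ← Polynomial.aeval_algHom_apply, hflam]
    have hpoly : ∀ r : Polynomial ℚ, Commute B (aeval Aq r) := by
      intro r
      induction r using Polynomial.induction_on with
      | C a => simpa using Algebra.commute_algebraMap_right a B
      | add u v hu hv => rw [map_add]; exact hu.add_right hv
      | monomial k a _ =>
        simp only [_root_.map_mul, aeval_C, map_pow, aeval_X]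
        exact (Algebra.commute_algebraMap_right a B).mul_right (hB.pow_right _)
    rw [h1]; exact hpoly q
  -- `Fin n → ℚ` as a `K`-vector space via `f`
  letI instKV : Module K (Fin n → ℚ) :=
    { smul := fun c v => (f c).mulVec v
      one_smul := fun v => by show (f 1).mulVec v = v; rw [_root_.map_one, Matrix.one_mulVec]
      mul_smul := fun a b v => by
        show (f (a * b)).mulVec v = (f a).mulVec ((f b).mulVec v)
        rw [_root_.map_mul, Matrix.mulVec_mulVec]
      smul_zero := fun a => Matrix.mulVec_zero _
      smul_add := fun a v w => Matrix.mulVec_add _ _ _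
      add_smul := fun a b v => by
        show (f (a + b)).mulVec v = (f a).mulVec v + (f b).mulVec v
        rw [map_add, Matrix.add_mulVec]
      zero_smul := fun v => by show (f 0).mulVec v = 0; rw [map_zero, Matrix.zero_mulVec] }
  have hsmul : ∀ (c : K) (v : Fin n → ℚ), c • v = (f c).mulVec v := fun c v => rfl
  letI : IsScalarTower ℚ K (Fin n → ℚ) :=
    ⟨fun c k v => by
      rw [hsmul, hsmul, _root_.map_smul, Matrix.smul_mulVec]⟩
  letI : SMulCommClass ℚ K (Fin n → ℚ) :=
    ⟨fun c k v => by
      rw [hsmul, hsmul, Matrix.mulVec_smul]⟩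
  have hrankK : Module.finrank ℚ K = n := by
    rw [← LinearEquiv.finrank_eq e.toLinearEquiv, IntermediateField.adjoin.finrank hint,
      hmin, hdegQ]
  haveI : FiniteDimensional ℚ (Fin n → ℚ) := inferInstance
  haveI : FiniteDimensional K (Fin n → ℚ) := FiniteDimensional.right ℚ K (Fin n → ℚ)
  have hrank1 : Module.finrank K (Fin n → ℚ) = 1 := by
    have h2 := Module.finrank_mul_finrank ℚ K (Fin n → ℚ)
    rw [hrankK, Module.finrank_fin_fun] at h2
    exact Nat.eq_of_mul_eq_mul_left hn (h2.trans (mul_one n).symm)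
  -- every rational matrix commuting with `Aq` is in the image of `f`
  have key : ∀ B : Matrix (Fin n) (Fin n) ℚ, Commute B Aq → ∃ c : K, f c = B := by
    intro B hB
    set v : Fin n → ℚ := Pi.single ⟨0, hn⟩ 1 with hv
    have hv0 : v ≠ 0 := by
      intro h
      have := congrFun h ⟨0, hn⟩
      simp [hv] at this
    obtain ⟨x, hx⟩ := (finrank_eq_one_iff_of_nonzero' v hv0).mp hrank1 (B.mulVec v)
    refine ⟨x, ?_⟩
    have hall : ∀ w, (f x).mulVec w = B.mulVec w := by
      intro w
      obtain ⟨c, hc⟩ := (finrank_eq_one_iff_of_nonzero' v hv0).mp hrank1 w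
      rw [← hc, hsmul]
      calc (f x) *ᵥ ((f c) *ᵥ v) = (f c) *ᵥ ((f x) *ᵥ v) := by
            rw [Matrix.mulVec_mulVec, Matrix.mulVec_mulVec, ← _root_.map_mul, ← _root_.map_mul,
              mul_comm]
        _ = (f c) *ᵥ (B *ᵥ v) := by rw [← hsmul x v, hx]
        _ = B *ᵥ ((f c) *ᵥ v) := by
            rw [Matrix.mulVec_mulVec, Matrix.mulVec_mulVec, ← (hcommf B hB c).eq]
    ext i j
    have h3 := congrFun (hall (Pi.single j 1)) i
    simpa [Matrix.mulVec_single] using h3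
  -- elements of the centralizer commute with `Aq` after base change
  have hAcomm : ∀ B : Subgroup.centralizer ({hA.unit} : Set (Matrix (Fin n) (Fin n) ℤ)ˣ),
      Commute (ψ ((B : (Matrix (Fin n) (Fin n) ℤ)ˣ) : Matrix (Fin n) (Fin n) ℤ)) Aq := by
    rintro ⟨B, hB⟩
    have h1 := Subgroup.mem_centralizer_iff.mp hB hA.unit (Set.mem_singleton _)
    have h2 : Commute ((B : (Matrix (Fin n) (Fin n) ℤ)ˣ) : Matrix (Fin n) (Fin n) ℤ) A := by
      have h3 := congrArg Units.val h1
      simp only [Units.val_mul, IsUnit.unit_spec] at h3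
      exact h3.symm
    exact h2.map ψ
  -- the map from the centralizer to `K`
  let g : Subgroup.centralizer ({hA.unit} : Set (Matrix (Fin n) (Fin n) ℤ)ˣ) → K :=
    fun B => (key _ (hAcomm B)).choose
  have hg : ∀ B, f (g B) = ψ ((B : (Matrix (Fin n) (Fin n) ℤ)ˣ) : Matrix (Fin n) (Fin n) ℤ) :=
    fun B => (key _ (hAcomm B)).choose_spec
  have hgmul : ∀ B C, g (B * C) = g B * g C := by
    intro B C
    apply hfinj
    rw [_root_.map_mul, hg, hg, hg]
    rw [show (((B * C : Subgroup.centralizer ({hA.unit} : Set (Matrix (Fin n) (Fin n) ℤ)ˣ)) :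
      (Matrix (Fin n) (Fin n) ℤ)ˣ) : Matrix (Fin n) (Fin n) ℤ)
      = ((B : (Matrix (Fin n) (Fin n) ℤ)ˣ) : Matrix (Fin n) (Fin n) ℤ) *
        ((C : (Matrix (Fin n) (Fin n) ℤ)ˣ) : Matrix (Fin n) (Fin n) ℤ) from rfl, _root_.map_mul]
  have hgone : g 1 = 1 := by
    apply hfinj
    rw [hg, _root_.map_one]
    exact _root_.map_one ψ
  -- compatibility of `f` with integral polynomial evaluation
  have hmapaeval : ∀ (X : Matrix (Fin n) (Fin n) ℤ) (c : K), f c = ψ X →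
      ∀ P : Polynomial ℤ, f (aeval c P) = ψ (aeval X P) := by
    intro X c hcX P
    calc f (aeval c P) = f (aeval c (P.map (algebraMap ℤ ℚ))) := by rw [aeval_map_algebraMap]
      _ = aeval (f c) (P.map (algebraMap ℤ ℚ)) := (aeval_algHom_apply f c _).symm
      _ = aeval (ψ.toIntAlgHom X) P := by rw [hcX]; exact aeval_map_algebraMap _ _ _
      _ = ψ.toIntAlgHom (aeval X P) := aeval_algHom_apply ψ.toIntAlgHom X P
      _ = ψ (aeval X P) := rfl
  have hgint : ∀ B, IsIntegral ℤ (g B) := by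
    intro B
    refine ⟨((B : (Matrix (Fin n) (Fin n) ℤ)ˣ) : Matrix (Fin n) (Fin n) ℤ).charpoly,
      Matrix.charpoly_monic _, ?_⟩
    rw [← Polynomial.aeval_def]
    apply hfinj
    rw [hmapaeval _ _ (hg B), Matrix.aeval_self_charpoly, map_zero, map_zero]
  -- assemble the group homomorphism
  let gO : Subgroup.centralizer ({hA.unit} : Set (Matrix (Fin n) (Fin n) ℤ)ˣ) → 𝓞 K :=
    fun B => ⟨g B, hgint B⟩
  have hgO : ∀ B, (algebraMap (𝓞 K) K) (gO B) = g B := fun B => rfl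
  have hgOmul : ∀ B C, gO (B * C) = gO B * gO C := by
    intro B C
    apply NumberField.RingOfIntegers.ext
    show g (B * C) = (algebraMap (𝓞 K) K) (gO B * gO C)
    rw [_root_.map_mul]
    exact hgmul B C
  let Φ : Subgroup.centralizer ({hA.unit} : Set (Matrix (Fin n) (Fin n) ℤ)ˣ) → (𝓞 K)ˣ :=
    fun B => ⟨gO B, gO B⁻¹,
      by rw [← hgOmul, mul_inv_cancel]; exact RingOfIntegers.ext hgone,
      by rw [← hgOmul, inv_mul_cancel]; exact RingOfIntegers.ext hgone⟩
  let φ : Subgroup.centralizer ({hA.unit} : Set (Matrix (Fin n) (Fin n) ℤ)ˣ) →* (𝓞 K)ˣ :=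
    MonoidHom.mk' Φ (fun B C => Units.ext (hgOmul B C))
  have hφval : ∀ B, (algebraMap (𝓞 K) K) ((φ B : 𝓞 K)) = g B := fun B => rfl
  have hφinj : Function.Injective φ := by
    intro B C h
    have h1 : g B = g C := congrArg (fun u => (algebraMap (𝓞 K) K) ((u : (𝓞 K)ˣ) : 𝓞 K)) h
    have h2 := (hg B).symm.trans ((congrArg f h1).trans (hg C))
    exact Subtype.ext (Units.ext (hψinj h2))
  refine ⟨φ, hφinj, ?_⟩
  -- find a common denominator `m` for the matrices of a `ℤ`-basis of `𝓞 K`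
  let b : Module.Basis (Module.Free.ChooseBasisIndex ℤ (𝓞 K)) ℤ (𝓞 K) := Module.Free.chooseBasis ℤ (𝓞 K)
  obtain ⟨m, hm⟩ := IsLocalization.exist_integer_multiples_of_finite (nonZeroDivisors ℤ)
    (fun t : (Module.Free.ChooseBasisIndex ℤ (𝓞 K)) × Fin n × Fin n =>
      f (algebraMap (𝓞 K) K (b t.1)) t.2.1 t.2.2)
  -- the submodule of integer matrices
  let W : Submodule ℤ (Matrix (Fin n) (Fin n) ℚ) :=
    { carrier := {M | ∀ i j, ∃ z : ℤ, (z : ℚ) = M i j}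
      add_mem' := by
        rintro X Y hX hY i j
        obtain ⟨a, ha⟩ := hX i j
        obtain ⟨c, hc⟩ := hY i j
        exact ⟨a + c, by rw [Matrix.add_apply, ← ha, ← hc]; push_cast; ring⟩
      zero_mem' := fun i j => ⟨0, by simp⟩
      smul_mem' := by
        rintro z X hX i j
        obtain ⟨a, ha⟩ := hX i j
        exact ⟨z * a, by rw [Matrix.smul_apply, ← ha, zsmul_eq_mul]; push_cast; ring⟩ }
  have hW : ∀ x : 𝓞 K, ((m : ℤ) • f (algebraMap (𝓞 K) K x)) ∈ W := by
    intro x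
    let L : 𝓞 K →ₗ[ℤ] Matrix (Fin n) (Fin n) ℚ :=
      (m : ℤ) • ((f.toLinearMap.restrictScalars ℤ).comp
        (IsScalarTower.toAlgHom ℤ (𝓞 K) K).toLinearMap)
    have hL : ∀ y, L y = (m : ℤ) • f (algebraMap (𝓞 K) K y) := fun y => rfl
    have hsub : (⊤ : Submodule ℤ (𝓞 K)) ≤ W.comap L := by
      rw [← b.span_eq, Submodule.span_le]
      rintro _ ⟨i, rfl⟩
      have hmem : L (b i) ∈ W := by
        rw [hL]
        intro r c
        obtain ⟨z, hz⟩ := hm (i, r, c)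
        refine ⟨z, ?_⟩
        rw [Matrix.smul_apply, ← hz]
        rfl
      exact hmem
    have := hsub (Submodule.mem_top (x := x))
    rwa [Submodule.mem_comap, hL] at this
  have hWD : ∀ M ∈ W, ∃ D : Matrix (Fin n) (Fin n) ℤ, ψ D = M := by
    intro M hM
    choose D hD using hM
    exact ⟨Matrix.of D, by ext i j; rw [hψ]; exact hD i j⟩
  -- the ideal generated by `m` and reduction mod `m`
  have hm0 : ((m : ℤ) : 𝓞 K) ≠ 0 := Int.cast_ne_zero.mpr (nonZeroDivisors.coe_ne_zero m)
  set I : Ideal (𝓞 K) := Ideal.span {((m : ℤ) : 𝓞 K)} with hI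
  have hIbot : I ≠ ⊥ := by
    rw [hI, Ne, Ideal.span_singleton_eq_bot]
    exact hm0
  letI : Fintype (𝓞 K ⧸ I) := @Fintype.ofFinite _ (Ideal.finiteQuotientOfFreeOfNeBot I hIbot)
  let ρ : (𝓞 K)ˣ →* (𝓞 K ⧸ I)ˣ := Units.map (Ideal.Quotient.mk I).toMonoidHom
  -- congruent-to-one units give integer matrices
  have hCmat : ∀ x : 𝓞 K, Ideal.Quotient.mk I x = 1 →
      ∃ C : Matrix (Fin n) (Fin n) ℤ, ψ C = f (algebraMap (𝓞 K) K x) := by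
    intro x hx
    have h1 : x - 1 ∈ I := Ideal.Quotient.eq.mp (by rw [RingHom.map_one]; exact hx)
    obtain ⟨a, ha⟩ := Ideal.mem_span_singleton'.mp (hI ▸ h1)
    have hxa : x = 1 + a * ((m : ℤ) : 𝓞 K) := by
      rw [ha]; ring
    obtain ⟨D, hD⟩ := hWD _ (hW a)
    refine ⟨1 + D, ?_⟩
    rw [_root_.map_add, _root_.map_one, hD, hxa, _root_.map_add, _root_.map_one, _root_.map_add,
      _root_.map_one, _root_.map_mul]
    congr 1
    rw [_root_.map_mul,
      show (algebraMap (𝓞 K) K) (((m : ℤ) : 𝓞 K)) = ((m : ℤ) : K) from map_intCast _ _,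
      show f (((m : ℤ) : K)) = ((m : ℤ) : Matrix (Fin n) (Fin n) ℚ) from map_intCast _ _,
      ← zsmul_eq_mul']
  -- the kernel of reduction mod `m` is contained in the range of `φ`
  have hker : ρ.ker ≤ φ.range := by
    intro u hu
    have hu1 : Ideal.Quotient.mk I ((u : (𝓞 K)ˣ) : 𝓞 K) = 1 :=
      congrArg Units.val (MonoidHom.mem_ker.mp hu)
    have hu2 : Ideal.Quotient.mk I (((u⁻¹ : (𝓞 K)ˣ) : 𝓞 K)) = 1 := by
      have h2 : ρ u⁻¹ = 1 := by rw [map_inv, MonoidHom.mem_ker.mp hu, inv_one]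
      exact congrArg Units.val h2
    obtain ⟨C, hC⟩ := hCmat _ hu1
    obtain ⟨C', hC'⟩ := hCmat _ hu2
    have huv : ((u : (𝓞 K)ˣ) : 𝓞 K) * ((u⁻¹ : (𝓞 K)ˣ) : 𝓞 K) = 1 := u.mul_inv
    have hvu : ((u⁻¹ : (𝓞 K)ˣ) : 𝓞 K) * ((u : (𝓞 K)ˣ) : 𝓞 K) = 1 := u.inv_mul
    have hCC' : C * C' = 1 := by
      apply hψinj
      rw [_root_.map_mul, hC, hC', ← _root_.map_mul, ← _root_.map_mul, huv, _root_.map_one,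
        _root_.map_one, _root_.map_one]
    have hC'C : C' * C = 1 := by
      apply hψinj
      rw [_root_.map_mul, hC, hC', ← _root_.map_mul, ← _root_.map_mul, hvu, _root_.map_one,
        _root_.map_one, _root_.map_one]
    set Bu : (Matrix (Fin n) (Fin n) ℤ)ˣ := ⟨C, C', hCC', hC'C⟩ with hBu
    have hcomm : A * C = C * A := by
      apply hψinj
      rw [_root_.map_mul, _root_.map_mul, hC, show ψ A = f lam from hflam.symm,
        ← _root_.map_mul, ← _root_.map_mul, mul_comm]
    have hmem : Bu ∈ Subgroup.centralizer ({hA.unit} : Set (Matrix (Fin n) (Fin n) ℤ)ˣ) := by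
      rw [Subgroup.mem_centralizer_iff]
      rintro y hy
      rw [Set.mem_singleton_iff] at hy
      subst hy
      refine Units.ext ?_
      show A * C = C * A
      exact hcomm
    refine ⟨⟨Bu, hmem⟩, ?_⟩
    apply Units.ext
    apply NumberField.RingOfIntegers.ext
    apply hfinj
    show f (g ⟨Bu, hmem⟩) = f (algebraMap (𝓞 K) K ((u : (𝓞 K)ˣ) : 𝓞 K))
    rw [hg]
    exact hC
  haveI : Finite (𝓞 K ⧸ I) := Finite.of_fintype _
  haveI : Finite ((𝓞 K ⧸ I))ˣ := Finite.of_injective Units.val Units.val_injective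
  haveI hFI : ρ.ker.FiniteIndex := by
    constructor
    rw [Subgroup.index_ker]
    haveI : Nonempty ρ.range := ⟨1⟩
    exact Nat.card_pos.ne'
  exact Subgroup.finiteIndex_of_le hker
end

section
/- Let A be an n×n integer matrix whose characteristic polynomial p_A is irreducible over ℚ, and let λ ∈ ℂ be a root of p_A. If v is a polynomial with rational coefficients such that the matrix v(A) has all integer entries, then v(λ) is an algebraic integer; if moreover v(A) has determinant ±1, then v(λ) is a unit in the ring of algebraic integers, i.e., both v(λ) and v(λ)⁻¹ are algebraic integers. -/
open Matrix Polynomial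

/-- Let `A` be an integer matrix with irreducible characteristic polynomial over `ℚ` and let
`λ ∈ ℂ` be a root of it. If `v ∈ ℚ[X]` is such that `v(A)` has integer entries, then `v(λ)`
is an algebraic integer; if moreover `det v(A) = ±1`, then `v(λ)⁻¹` is an algebraic integer
as well, i.e. `v(λ)` is a unit in the ring of algebraic integers. -/
theorem aeval_root_integral_of_integer_matrix (n : ℕ)
    (A : Matrix (Fin n) (Fin n) ℤ)
    (hirr : Irreducible (A.charpoly.map (Int.castRingHom ℚ)))
    (lam : ℂ) (hroot : Polynomial.aeval lam A.charpoly = 0)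
    (v : Polynomial ℚ)
    (hint : ∀ i j, ∃ m : ℤ, (Polynomial.aeval (A.map (Int.cast : ℤ → ℚ)) v) i j = m) :
    IsIntegral ℤ (Polynomial.aeval lam v) ∧
      (((Polynomial.aeval (A.map (Int.cast : ℤ → ℚ)) v).det = 1 ∨
        (Polynomial.aeval (A.map (Int.cast : ℤ → ℚ)) v).det = -1) →
        IsIntegral ℤ (Polynomial.aeval lam v)⁻¹) := by
  rcases Nat.eq_zero_or_pos n with hn | hn
  · exfalso
    subst hn
    have h1 : A.charpoly = 1 := by
      simp [Matrix.charpoly, Matrix.det_isEmpty]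
    rw [h1, Polynomial.map_one] at hirr
    exact not_irreducible_one hirr
  haveI : Nonempty (Fin n) := ⟨⟨0, hn⟩⟩
  have hcastfun : (Int.cast : ℤ → ℚ) = ⇑(Int.castRingHom ℚ) := rfl
  set Aq : Matrix (Fin n) (Fin n) ℚ := A.map (Int.cast : ℤ → ℚ) with hAq
  set B : Matrix (Fin n) (Fin n) ℚ := Polynomial.aeval Aq v with hB
  choose C hC using hint
  have hCB : (Matrix.of C).map (Int.cast : ℤ → ℚ) = B := by
    ext i j; simp [hC i j]
  set q : Polynomial ℤ := (Matrix.of C).charpoly with hq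
  have hqmonic : q.Monic := Matrix.charpoly_monic _
  have hqB : q.map (Int.castRingHom ℚ) = B.charpoly := by
    rw [hq, ← Matrix.charpoly_map, ← hcastfun, hCB]
  have hAqc : Aq.charpoly = A.charpoly.map (Int.castRingHom ℚ) := by
    rw [hAq, hcastfun]
    exact Matrix.charpoly_map A (Int.castRingHom ℚ)
  have hirr' : Irreducible Aq.charpoly := hAqc ▸ hirr
  have hAint : IsIntegral ℚ Aq := IsIntegral.of_finite ℚ Aq
  obtain ⟨c, hc⟩ := Matrix.minpoly_dvd_charpoly Aq
  have hcu : IsUnit c := by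
    rcases hirr'.isUnit_or_isUnit hc with h | h
    · exact absurd h (minpoly.not_isUnit ℚ Aq)
    · exact h
  have hmin : minpoly ℚ Aq = Aq.charpoly :=
    Polynomial.eq_of_monic_of_associated (minpoly.monic hAint) (Matrix.charpoly_monic _)
      ⟨hcu.unit, by rw [hc]; rfl⟩
  have hCH : Polynomial.aeval B B.charpoly = 0 := Matrix.aeval_self_charpoly B
  have hcomp : Polynomial.aeval Aq (B.charpoly.comp v) = 0 := by
    rw [Polynomial.aeval_comp, ← hB]; exact hCH
  have hdvd2 : Aq.charpoly ∣ B.charpoly.comp v := hmin ▸ minpoly.dvd ℚ Aq hcomp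
  have hlam : Polynomial.aeval lam Aq.charpoly = 0 := by
    rw [hAqc, ← algebraMap_int_eq, Polynomial.aeval_map_algebraMap]
    exact hroot
  obtain ⟨w, hw⟩ := hdvd2
  have hrootB : Polynomial.aeval (Polynomial.aeval lam v) B.charpoly = 0 := by
    rw [← Polynomial.aeval_comp, hw, _root_.map_mul, hlam, zero_mul]
  set x : ℂ := Polynomial.aeval lam v with hx
  have hqx : Polynomial.aeval x q = 0 := by
    have h := hrootB
    rw [← hqB, ← algebraMap_int_eq, Polynomial.aeval_map_algebraMap] at h
    exact h
  refine ⟨⟨q, hqmonic, hqx⟩, ?_⟩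
  intro hdet
  have hdetC : Matrix.det (Matrix.of C) = 1 ∨ Matrix.det (Matrix.of C) = -1 := by
    have hcast : ((Matrix.det (Matrix.of C) : ℤ) : ℚ) = B.det := by
      rw [← hCB, hcastfun]
      exact RingHom.map_det (Int.castRingHom ℚ) (Matrix.of C)
    rcases hdet with h | h
    · left; exact_mod_cast hcast.trans h
    · right; exact_mod_cast hcast.trans h
  have hc0 : q.coeff 0 = 1 ∨ q.coeff 0 = -1 := by
    have hd := Matrix.det_eq_sign_charpoly_coeff (Matrix.of C)
    rw [← hq] at hd
    rcases hdetC with h | h <;> rcases neg_one_pow_eq_or ℤ (Fintype.card (Fin n)) with h2 | h2 <;>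
      rw [h, h2] at hd <;> omega
  have hc0sq : q.coeff 0 * q.coeff 0 = 1 := by rcases hc0 with h | h <;> rw [h] <;> ring
  have hxne : x ≠ 0 := by
    intro h0
    rw [h0, Polynomial.aeval_def, Polynomial.eval₂_at_zero] at hqx
    have h3 : ((q.coeff 0 : ℤ) : ℂ) = 0 := hqx
    rcases hc0 with h | h <;> rw [h] at h3 <;> norm_num at h3
  haveI := invertibleOfNonzero hxne
  set p : Polynomial ℤ := Polynomial.C (q.coeff 0) * q.reverse with hp
  have hpmonic : p.Monic := by
    have htc : q.trailingCoeff = q.coeff 0 := by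
      unfold Polynomial.trailingCoeff
      rw [Polynomial.natTrailingDegree_eq_zero_of_constantCoeff_ne_zero]
      simp only [Polynomial.constantCoeff_apply]
      rcases hc0 with h | h <;> rw [h] <;> norm_num
    rw [Polynomial.Monic, hp, Polynomial.leadingCoeff_mul, Polynomial.leadingCoeff_C,
      Polynomial.reverse_leadingCoeff, htc, hc0sq]
  refine ⟨p, hpmonic, ?_⟩
  have hrev : Polynomial.eval₂ (algebraMap ℤ ℂ) (⅟x) q.reverse = 0 :=
    (Polynomial.eval₂_reverse_eq_zero_iff (algebraMap ℤ ℂ) x q).mpr hqx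
  rw [invOf_eq_inv] at hrev
  rw [hp, Polynomial.eval₂_mul, hrev, mul_zero]
end

section
/- Let A be an n×n integer matrix whose characteristic polynomial p_A is irreducible over ℚ, and let λ ∈ ℂ be a root of p_A. If v and w are polynomials with integer coefficients such that v(λ)·w(λ) = 1, then the integer matrix v(A) has determinant ±1 and commutes with A; that is, v(A) ∈ C(A). -/
open Matrix Polynomial

/-- Let `A` be an integer matrix with irreducible characteristic polynomial over `ℚ` and let
`λ ∈ ℂ` be a root of it. If `v, w ∈ ℤ[X]` satisfy `v(λ)·w(λ) = 1`, then the integer matrix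
`v(A)` has determinant `±1` and commutes with `A`, i.e. `v(A) ∈ C(A)`. -/
theorem aeval_matrix_mem_centralizer_of_unit_value (n : ℕ)
    (A : Matrix (Fin n) (Fin n) ℤ)
    (hirr : Irreducible (A.charpoly.map (Int.castRingHom ℚ)))
    (lam : ℂ) (hroot : Polynomial.aeval lam A.charpoly = 0)
    (v w : Polynomial ℤ)
    (hunit : Polynomial.aeval lam v * Polynomial.aeval lam w = 1) :
    ((Polynomial.aeval A v).det = 1 ∨ (Polynomial.aeval A v).det = -1) ∧
      A * Polynomial.aeval A v = Polynomial.aeval A v * A := by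
  have hmonic : (A.charpoly.map (Int.castRingHom ℚ)).Monic :=
    (Matrix.charpoly_monic A).map _
  have hroot' : Polynomial.aeval lam (A.charpoly.map (Int.castRingHom ℚ)) = 0 := by
    rw [show (Int.castRingHom ℚ) = algebraMap ℤ ℚ from rfl, aeval_map_algebraMap]
    exact hroot
  have hmin : minpoly ℚ lam = A.charpoly.map (Int.castRingHom ℚ) :=
    (minpoly.eq_of_irreducible_of_monic hirr hroot' hmonic).symm
  have hdvdQ : A.charpoly.map (Int.castRingHom ℚ) ∣ (v * w - 1).map (Int.castRingHom ℚ) := by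
    rw [← hmin]
    apply minpoly.dvd
    rw [show (Int.castRingHom ℚ) = algebraMap ℤ ℚ from rfl, aeval_map_algebraMap]
    simp [hunit]
  have hdvd : A.charpoly ∣ v * w - 1 :=
    (Polynomial.map_dvd_map (Int.castRingHom ℚ)
      (Int.cast_injective) (Matrix.charpoly_monic A)).mp hdvdQ
  obtain ⟨q, hq⟩ := hdvd
  have hvw : Polynomial.aeval A v * Polynomial.aeval A w = 1 := by
    have h0 : Polynomial.aeval A (v * w - 1) = 0 := by
      rw [hq, _root_.map_mul, Matrix.aeval_self_charpoly, zero_mul]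
    have := sub_eq_zero.mp (by simpa using h0)
    simpa [_root_.map_mul] using this
  have hdet : IsUnit ((Polynomial.aeval A v).det) := by
    have : (Polynomial.aeval A v).det * (Polynomial.aeval A w).det = 1 := by
      rw [← Matrix.det_mul, hvw, Matrix.det_one]
    exact IsUnit.of_mul_eq_one _ this
  refine ⟨Int.isUnit_iff.mp hdet, ?_⟩
  calc A * Polynomial.aeval A v = Polynomial.aeval A (X * v) := by
        rw [_root_.map_mul, aeval_X]
    _ = Polynomial.aeval A (v * X) := by rw [mul_comm]
    _ = Polynomial.aeval A v * A := by rw [_root_.map_mul, aeval_X]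
end

section
/- Let A be an n×n integer matrix with det A = ±1 whose characteristic polynomial p_A is irreducible over ℚ, let λ be a root of p_A, F = ℚ(λ), and 𝓞_F the ring of integers of F. Assume ℤ[λ]^× = 𝓞_F^×, i.e., every unit u of 𝓞_F satisfies u ∈ ℤ[λ] and u⁻¹ ∈ ℤ[λ]. Then γ(C(A)) = 𝓞_F^×; precisely: (i) for every B ∈ GL(n,ℤ) with AB = BA there is a polynomial v ∈ ℚ[X] with v(A) = B and v(λ) ∈ 𝓞_F^×, and (ii) for every unit u ∈ 𝓞_F^× there are B ∈ GL(n,ℤ) with AB = BA and a polynomial v ∈ ℤ[X] with v(A) = B and v(λ) = u. -/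
open Matrix Polynomial NumberField

lemma sum_mulVec' {n : ℕ} {ι : Type*} (s : Finset ι) (f : ι → Matrix (Fin n) (Fin n) ℚ)
    (x : Fin n → ℚ) : (∑ i ∈ s, f i) *ᵥ x = ∑ i ∈ s, (f i) *ᵥ x := by
  induction s using Finset.cons_induction with
  | empty => simp
  | cons a s ha ih => simp [Finset.sum_cons, add_mulVec, ih]

lemma comm_eq_aeval {n : ℕ} (A : Matrix (Fin n) (Fin n) ℚ)
    (hirr : Irreducible A.charpoly)
    (M : Matrix (Fin n) (Fin n) ℚ) (hM : A * M = M * A) :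
    ∃ v : Polynomial ℚ, aeval A v = M := by
  have hn : n ≠ 0 := by
    rintro rfl
    have : A.charpoly = 1 := by rw [Matrix.charpoly, Matrix.det_fin_zero]
    rw [this] at hirr
    exact hirr.not_isUnit isUnit_one
  haveI : NeZero n := ⟨hn⟩
  set p := A.charpoly with hp
  have hpA : aeval A p = 0 := A.aeval_self_charpoly
  have hpdeg : p.natDegree = n := by rw [hp, A.charpoly_natDegree_eq_dim, Fintype.card_fin]
  set x : Fin n → ℚ := Pi.single 0 1 with hxdef
  have hx : x ≠ 0 := by
    intro h
    have := congrFun h 0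
    simp [hxdef, Pi.single_eq_same] at this
  have key : ∀ q : Polynomial ℚ, q ≠ 0 → q.natDegree < n → (aeval A q) *ᵥ x ≠ 0 := by
    intro q hq hqdeg hqx
    have hpnd : ¬ p ∣ q := by
      intro hdvd
      have := Polynomial.natDegree_le_of_dvd hdvd hq
      omega
    obtain ⟨a, b, hab⟩ := (hirr.coprime_iff_not_dvd).2 hpnd
    have h1 : (aeval A (b * q)) *ᵥ x = 0 := by
      rw [_root_.map_mul, ← mulVec_mulVec, hqx, mulVec_zero]
    have h2 : (aeval A (a * p)) *ᵥ x = 0 := by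
      rw [_root_.map_mul, hpA, mul_zero, zero_mulVec]
    have h3 : (aeval A (a * p + b * q)) *ᵥ x = x := by rw [hab]; simp
    rw [map_add, add_mulVec, h1, h2, add_zero] at h3
    exact hx h3.symm
  set f : Fin n → (Fin n → ℚ) := fun i => (A ^ (i : ℕ)) *ᵥ x with hfdef
  have haevalsum : ∀ g : Fin n → ℚ,
      (aeval A (∑ i : Fin n, Polynomial.C (g i) * X ^ (i : ℕ))) *ᵥ x
        = ∑ i : Fin n, g i • f i := by
    intro g
    rw [map_sum, sum_mulVec']
    refine Finset.sum_congr rfl fun i _ => ?_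
    rw [_root_.map_mul, aeval_C, aeval_X_pow, ← Algebra.smul_def, smul_mulVec]
  have hcoeff : ∀ g : Fin n → ℚ, ∀ j : Fin n,
      (∑ i : Fin n, Polynomial.C (g i) * X ^ (i : ℕ)).coeff (j : ℕ) = g j := by
    intro g j
    rw [finset_sum_coeff, Finset.sum_eq_single j]
    · simp
    · intro i _ hij
      have hne : (j : ℕ) ≠ (i : ℕ) := fun h => hij (Fin.ext h.symm)
      simp [coeff_C_mul, coeff_X_pow, hne]
    · simp
  have hli : LinearIndependent ℚ f := by
    rw [Fintype.linearIndependent_iff]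
    intro g hg j
    set q : Polynomial ℚ := ∑ i : Fin n, Polynomial.C (g i) * X ^ (i : ℕ) with hqdef
    by_cases hq : q = 0
    · have := hcoeff g j
      rw [← hqdef, hq] at this
      simpa using this.symm
    · exfalso
      have hqdeg : q.natDegree < n := by
        by_contra hge
        push_neg at hge
        have hcz : q.coeff q.natDegree = 0 := by
          rw [hqdef, finset_sum_coeff]
          refine Finset.sum_eq_zero fun i _ => ?_
          have : (i : ℕ) ≠ q.natDegree := by have := i.isLt; omega
          simp [coeff_C_mul, coeff_X_pow, Ne.symm this]
          exact fun h => absurd h.symm this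
        exact hq (Polynomial.leadingCoeff_eq_zero.mp hcz)
      exact key q hq hqdeg (by rw [haevalsum g]; exact hg)
  have hcard : Fintype.card (Fin n) = Module.finrank ℚ (Fin n → ℚ) := by
    simp [Module.finrank_fin_fun]
  set b := basisOfLinearIndependentOfCardEqFinrank hli hcard with hbdef
  have hb : ∀ i, b i = f i := fun i => by
    rw [hbdef, coe_basisOfLinearIndependentOfCardEqFinrank]
  set v : Polynomial ℚ := ∑ i : Fin n, Polynomial.C (b.repr (M *ᵥ x) i) * X ^ (i : ℕ) with hvdef
  refine ⟨v, ?_⟩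
  have hvx : (aeval A v) *ᵥ x = M *ᵥ x := by
    rw [hvdef, haevalsum]
    have := b.sum_repr (M *ᵥ x)
    simpa [hb] using this
  -- commutation facts
  have hcommv : ∀ k : ℕ, (aeval A v) * A ^ k = A ^ k * (aeval A v) := by
    intro k
    have h1 : Commute A (aeval A v) := by
      show A * aeval A v = aeval A v * A
      calc A * aeval A v = aeval A (X * v) := by rw [_root_.map_mul, aeval_X]
      _ = aeval A (v * X) := by rw [mul_comm]
      _ = aeval A v * A := by rw [_root_.map_mul, aeval_X]
    exact ((h1.symm).pow_right k).eq
  have hMk : ∀ k : ℕ, A ^ k * M = M * A ^ k := fun k =>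
    ((show Commute A M from hM).pow_left k).eq
  -- equality on the basis
  have hbasis : ∀ k : Fin n, (aeval A v) *ᵥ (b k) = M *ᵥ (b k) := by
    intro k
    rw [hb, hfdef]
    calc (aeval A v) *ᵥ ((A ^ (k : ℕ)) *ᵥ x)
        = ((aeval A v) * A ^ (k : ℕ)) *ᵥ x := by rw [mulVec_mulVec]
      _ = (A ^ (k : ℕ) * (aeval A v)) *ᵥ x := by rw [hcommv]
      _ = (A ^ (k : ℕ)) *ᵥ ((aeval A v) *ᵥ x) := by rw [mulVec_mulVec]
      _ = (A ^ (k : ℕ)) *ᵥ (M *ᵥ x) := by rw [hvx]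
      _ = (A ^ (k : ℕ) * M) *ᵥ x := by rw [mulVec_mulVec]
      _ = (M * A ^ (k : ℕ)) *ᵥ x := by rw [hMk]
      _ = M *ᵥ ((A ^ (k : ℕ)) *ᵥ x) := by rw [mulVec_mulVec]
  have : Matrix.toLin' (aeval A v) = Matrix.toLin' M :=
    b.ext fun k => by simpa [Matrix.toLin'_apply] using hbasis k
  exact Matrix.toLin'.injective this


/-- Let `A ∈ GL(n, ℤ)` have irreducible characteristic polynomial over `ℚ` with root `λ`
generating the number field `F = ℚ(λ)`. If `ℤ[λ]^× = 𝓞_F^×` (every unit of `𝓞_F` lies,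
together with its inverse, in `ℤ[λ] = Algebra.adjoin ℤ {λ}`), then `γ(C(A)) = 𝓞_F^×`:
(i) every `B ∈ GL(n, ℤ)` commuting with `A` is `v(A)` for some `v ∈ ℚ[X]` with `v(λ)` a
unit of `𝓞_F`, and (ii) every unit `u ∈ 𝓞_F^×` arises as `v(λ)` for some `v ∈ ℤ[X]` with
`B = v(A) ∈ GL(n, ℤ)` commuting with `A`. -/
theorem gamma_centralizer_eq_units (n : ℕ)
    (A : Matrix (Fin n) (Fin n) ℤ) (hdet : A.det = 1 ∨ A.det = -1)
    (hirr : Irreducible (A.charpoly.map (Int.castRingHom ℚ)))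
    (K : Type) [Field K] [NumberField K] (lam : K)
    (hroot : Polynomial.aeval lam A.charpoly = 0)
    (hgen : IntermediateField.adjoin ℚ {lam} = ⊤)
    (hZl : ∀ u : (𝓞 K)ˣ, (algebraMap (𝓞 K) K (u : 𝓞 K) ∈ Algebra.adjoin ℤ ({lam} : Set K))
      ∧ (algebraMap (𝓞 K) K ((u⁻¹ : (𝓞 K)ˣ) : 𝓞 K) ∈ Algebra.adjoin ℤ ({lam} : Set K))) :
    (∀ B : Matrix (Fin n) (Fin n) ℤ, (B.det = 1 ∨ B.det = -1) → A * B = B * A →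
      ∃ v : Polynomial ℚ,
        Polynomial.aeval (A.map (Int.cast : ℤ → ℚ)) v = B.map (Int.cast : ℤ → ℚ) ∧
        ∃ u : (𝓞 K)ˣ, algebraMap (𝓞 K) K (u : 𝓞 K) = Polynomial.aeval lam v) ∧
    (∀ u : (𝓞 K)ˣ, ∃ (B : Matrix (Fin n) (Fin n) ℤ) (v : Polynomial ℤ),
      (B.det = 1 ∨ B.det = -1) ∧ A * B = B * A ∧
      Polynomial.aeval A v = B ∧
      Polynomial.aeval lam v = algebraMap (𝓞 K) K (u : 𝓞 K)) := by
  have hn : n ≠ 0 := by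
    rintro rfl
    have h1 : A.charpoly = 1 := by rw [Matrix.charpoly, Matrix.det_fin_zero]
    rw [h1, Polynomial.map_one] at hirr
    exact hirr.not_isUnit isUnit_one
  haveI : NeZero n := ⟨hn⟩
  set Aq : Matrix (Fin n) (Fin n) ℚ := A.map (Int.cast : ℤ → ℚ) with hAq
  have hchq : Aq.charpoly = A.charpoly.map (Int.castRingHom ℚ) :=
    A.charpoly_map (Int.castRingHom ℚ)
  have hmonq : (A.charpoly.map (Int.castRingHom ℚ)).Monic := A.charpoly_monic.map _
  have hirrA : Irreducible Aq.charpoly := by rw [hchq]; exact hirr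
  have hminA : minpoly ℚ Aq = A.charpoly.map (Int.castRingHom ℚ) :=
    (minpoly.eq_of_irreducible_of_monic hirr (by rw [← hchq]; exact Aq.aeval_self_charpoly)
      hmonq).symm
  have hrootq : aeval lam (A.charpoly.map (Int.castRingHom ℚ)) = 0 := by
    rw [← algebraMap_int_eq, aeval_map_algebraMap]; exact hroot
  have htrans : ∀ q : Polynomial ℚ, aeval Aq q = 0 → aeval lam q = 0 := by
    intro q hq
    have hd := minpoly.dvd ℚ Aq hq
    rw [hminA] at hd
    obtain ⟨r, rfl⟩ := hd
    rw [_root_.map_mul, hrootq, zero_mul]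
  have hint : ∀ (C : Matrix (Fin n) (Fin n) ℤ) (v : Polynomial ℚ),
      aeval Aq v = C.map (Int.cast : ℤ → ℚ) → IsIntegral ℤ (aeval lam v) := by
    intro C v hCv
    refine ⟨C.charpoly, C.charpoly_monic, ?_⟩
    have h1 : aeval Aq ((C.charpoly.map (Int.castRingHom ℚ)).comp v) = 0 := by
      rw [aeval_comp, hCv, ← Matrix.charpoly_map]
      exact aeval_self_charpoly _
    have h2 := htrans _ h1
    rw [aeval_comp, ← algebraMap_int_eq, aeval_map_algebraMap] at h2
    exact h2
  have hmapmul : ∀ (P Q : Matrix (Fin n) (Fin n) ℤ),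
      (P * Q).map (Int.cast : ℤ → ℚ) = P.map (Int.cast : ℤ → ℚ) * Q.map (Int.cast : ℤ → ℚ) :=
    fun P Q => Matrix.map_mul (f := Int.castRingHom ℚ)
  constructor
  · -- part (i)
    intro B hBdet hcomm
    have hudet : IsUnit B.det := by
      rcases hBdet with h | h <;> rw [h] <;> exact Int.isUnit_iff.mpr (by simp)
    have hBBi : B * B⁻¹ = 1 := Matrix.mul_nonsing_inv B hudet
    have hBiB : B⁻¹ * B = 1 := Matrix.nonsing_inv_mul B hudet
    have hABi : A * B⁻¹ = B⁻¹ * A := by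
      calc A * B⁻¹ = B⁻¹ * B * A * B⁻¹ := by rw [hBiB, one_mul]
        _ = B⁻¹ * (A * B) * B⁻¹ := by rw [hcomm]; noncomm_ring
        _ = B⁻¹ * A * (B * B⁻¹) := by noncomm_ring
        _ = B⁻¹ * A := by rw [hBBi, mul_one]
    have hcommq : Aq * B.map (Int.cast : ℤ → ℚ) = B.map (Int.cast : ℤ → ℚ) * Aq := by
      rw [hAq, ← hmapmul, ← hmapmul, hcomm]
    have hcommiq : Aq * (B⁻¹).map (Int.cast : ℤ → ℚ) = (B⁻¹).map (Int.cast : ℤ → ℚ) * Aq := by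
      rw [hAq, ← hmapmul, ← hmapmul, hABi]
    obtain ⟨v, hv⟩ := comm_eq_aeval Aq hirrA _ hcommq
    obtain ⟨w, hw⟩ := comm_eq_aeval Aq hirrA _ hcommiq
    have hvw : aeval lam v * aeval lam w = 1 := by
      have h1 : aeval Aq (v * w - 1) = 0 := by
        rw [map_sub, _root_.map_mul, hv, hw, _root_.map_one, ← hmapmul, hBBi]
        simp
      have h2 := htrans _ h1
      rw [map_sub, _root_.map_mul, _root_.map_one, sub_eq_zero] at h2
      exact h2
    have hvint : IsIntegral ℤ (aeval lam v) := hint B v hv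
    have hwint : IsIntegral ℤ (aeval lam w) := hint B⁻¹ w hw
    refine ⟨v, hv, ⟨⟨⟨aeval lam v, hvint⟩, ⟨aeval lam w, hwint⟩, ?_, ?_⟩, rfl⟩⟩
    · exact RingOfIntegers.ext hvw
    · exact RingOfIntegers.ext ((mul_comm _ _).trans hvw)
  · -- part (ii)
    intro u
    have hintlam : IsIntegral ℤ lam := ⟨A.charpoly, A.charpoly_monic, hroot⟩
    obtain ⟨w, hw⟩ : ∃ w : Polynomial ℤ, aeval lam w = algebraMap (𝓞 K) K (u : 𝓞 K) := by
      have := (hZl u).1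
      rw [Algebra.adjoin_singleton_eq_range_aeval] at this
      exact this
    obtain ⟨w', hw'⟩ : ∃ w' : Polynomial ℤ,
        aeval lam w' = algebraMap (𝓞 K) K ((u⁻¹ : (𝓞 K)ˣ) : 𝓞 K) := by
      have := (hZl u).2
      rw [Algebra.adjoin_singleton_eq_range_aeval] at this
      exact this
    -- minpoly ℤ lam = charpoly
    have hdvd := minpoly.isIntegrallyClosed_dvd hintlam hroot
    have hminq : minpoly ℚ lam = A.charpoly.map (Int.castRingHom ℚ) :=
      (minpoly.eq_of_irreducible_of_monic hirr hrootq hmonq).symm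
    have hmineq : minpoly ℚ lam = (minpoly ℤ lam).map (algebraMap ℤ ℚ) :=
      minpoly.isIntegrallyClosed_eq_field_fractions' ℚ hintlam
    have hdeg : A.charpoly.natDegree ≤ (minpoly ℤ lam).natDegree := by
      have h1 : (minpoly ℤ lam).natDegree = ((minpoly ℤ lam).map (algebraMap ℤ ℚ)).natDegree :=
        ((minpoly.monic hintlam).natDegree_map _).symm
      have h2 : A.charpoly.natDegree = (A.charpoly.map (Int.castRingHom ℚ)).natDegree :=
        (A.charpoly_monic.natDegree_map _).symm
      rw [h1, ← hmineq, hminq, ← h2]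
    have hminZ : minpoly ℤ lam = A.charpoly :=
      Polynomial.eq_of_monic_of_associated (minpoly.monic hintlam) A.charpoly_monic
        (Polynomial.associated_of_dvd_of_natDegree_le_of_leadingCoeff hdvd hdeg
          (by rw [A.charpoly_monic.leadingCoeff, (minpoly.monic hintlam).leadingCoeff]))
    have hdvd2 : A.charpoly ∣ w * w' - 1 := by
      rw [← hminZ]
      refine minpoly.isIntegrallyClosed_dvd hintlam ?_
      rw [map_sub, _root_.map_mul, hw, hw', _root_.map_one, ← _root_.map_mul, ← _root_.map_one (algebraMap (𝓞 K) K),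
        sub_eq_zero]
      congr 1
      exact Units.mul_inv u
    obtain ⟨c, hc⟩ := hdvd2
    have hBB' : (aeval A w) * (aeval A w') = 1 := by
      have : w * w' = A.charpoly * c + 1 := by rw [← hc]; ring
      calc (aeval A w) * (aeval A w') = aeval A (w * w') := (_root_.map_mul _ _ _).symm
        _ = aeval A (A.charpoly * c + 1) := by rw [this]
        _ = 1 := by rw [map_add, _root_.map_mul, A.aeval_self_charpoly, zero_mul, zero_add, _root_.map_one]
    have hdetB : (aeval A w).det = 1 ∨ (aeval A w).det = -1 := by
      have : (aeval A w).det * (aeval A w').det = 1 := by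
        rw [← Matrix.det_mul, hBB', Matrix.det_one]
      exact Int.isUnit_iff.mp (IsUnit.of_mul_eq_one _ this)
    have hcommB : A * aeval A w = aeval A w * A := by
      calc A * aeval A w = aeval A (X * w) := by rw [_root_.map_mul, aeval_X]
        _ = aeval A (w * X) := by rw [mul_comm]
        _ = aeval A w * A := by rw [_root_.map_mul, aeval_X]
    exact ⟨aeval A w, w, hdetB, hcommB, rfl, hw⟩
end

section
/- Let A be an n×n integer matrix with det A = ±1 whose characteristic polynomial p_A is irreducible over ℚ, let λ be a root of p_A, F = ℚ(λ), and 𝓞_F the ring of integers of F. Assume: (i) every unit u of 𝓞_F satisfies u ∈ ℤ[λ] and u⁻¹ ∈ ℤ[λ] (i.e., ℤ[λ]^× = 𝓞_F^×); and (ii) λ is a fundamental unit, i.e., the unit group 𝓞_F^× is generated by λ together with its torsion subgroup (the roots of unity in F). Then there exists J ∈ GL(n,ℤ) with AJ = JA and of finite even order 2k satisfying J^k = −I, such that every B ∈ GL(n,ℤ) with AB = BA can be written B = A^m · J^l for some integer m and some integer l with 0 ≤ l < 2k; that is, C(A) = ⟨A⟩ × ⟨J⟩. -/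
open Matrix Polynomial NumberField

private lemma aux_sq {R : Type*} [CommRing R] [IsDomain R] (x : R) (h : x^2 = 1) :
    x = 1 ∨ x = -1 := by
  have : (x-1)*(x+1) = 0 := by linear_combination h
  rcases mul_eq_zero.mp this with h|h
  · left; exact sub_eq_zero.mp h
  · right; exact eq_neg_of_add_eq_zero_left h

private lemma aux_centralizer {n : ℕ} (hn : 0 < n) {K : Type} [Field K] [Algebra ℚ K]
    (hrank : Module.finrank ℚ K = n)
    (ψ : K →ₐ[ℚ] Matrix (Fin n) (Fin n) ℚ)
    (B : Matrix (Fin n) (Fin n) ℚ) (hcomm : ∀ x : K, ψ x * B = B * ψ x) :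
    ∃ u : K, ψ u = B := by
  classical
  set V := Fin n → ℚ with hV
  let Φ : K →ₐ[ℚ] Module.End ℚ V := (Matrix.toLinAlgEquiv').toAlgHom.comp ψ
  letI : Module K V := Module.compHom V Φ.toRingHom
  have hsmul : ∀ (k : K) (v : V), k • v = Φ k v := fun k v => rfl
  haveI : IsScalarTower ℚ K V := ⟨by
    intro q k v
    show Φ (q • k) v = q • (Φ k v)
    rw [_root_.map_smul]
    rfl⟩
  have hfinV : Module.finrank ℚ V = n := Module.finrank_fin_fun ℚ
  have hmul : Module.finrank ℚ K * Module.finrank K V = Module.finrank ℚ V :=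
    Module.finrank_mul_finrank ℚ K V
  rw [hrank, hfinV] at hmul
  have hrk1 : Module.finrank K V = 1 := by nlinarith [hmul]
  haveI : FiniteDimensional ℚ V := by infer_instance
  haveI : Module.Finite K V := Module.Finite.of_restrictScalars_finite ℚ K V
  let b : Module.Basis (Fin 1) K V := Module.finBasisOfFinrankEq K V hrk1
  let f : Module.End ℚ V := Matrix.toLinAlgEquiv' B
  have hfΦ : ∀ (k : K) (v : V), f (Φ k v) = Φ k (f v) := by
    intro k v
    have h1 : Φ k * f = f * Φ k := by
      show Matrix.toLinAlgEquiv' (ψ k) * Matrix.toLinAlgEquiv' B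
        = Matrix.toLinAlgEquiv' B * Matrix.toLinAlgEquiv' (ψ k)
      rw [← _root_.map_mul, ← _root_.map_mul, hcomm]
    have := congrArg (fun g : Module.End ℚ V => g v) h1
    simpa [Module.End.mul_apply] using this.symm
  let fK : V →ₗ[K] V :=
    { toFun := f
      map_add' := f.map_add
      map_smul' := by
        intro k v
        show f (Φ k v) = k • f v
        rw [hfΦ k v, hsmul] }
  have hspan : ∀ v : V, v = (b.repr v 0) • b 0 := by
    intro v
    have := b.sum_repr v
    simpa [Fin.sum_univ_one] using this.symm
  set u : K := b.repr (fK (b 0)) 0 with hu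
  refine ⟨u, ?_⟩
  apply Matrix.toLinAlgEquiv'.injective
  show Φ u = f
  refine LinearMap.ext fun v => ?_
  have h1 : fK (b 0) = u • b 0 := hspan (fK (b 0))
  have h2 : fK v = u • v := by
    conv_lhs => rw [hspan v]
    rw [fK.map_smul, h1, smul_comm, ← hspan v]
  calc Φ u v = u • v := (hsmul u v).symm
    _ = fK v := h2.symm
    _ = f v := rfl


set_option maxHeartbeats 2000000 in
/-- Let `A ∈ GL(n, ℤ)` have irreducible characteristic polynomial over `ℚ` with root `λ`
generating `F = ℚ(λ)`. Assume `ℤ[λ]^× = 𝓞_F^×` and that `λ` is a fundamental unit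
(every unit of `𝓞_F` is a root of unity times an integer power of `λ`). Then there is
`J ∈ GL(n, ℤ)` commuting with `A`, of finite even order `2k` with `J^k = −I`, such that
every `B ∈ GL(n, ℤ)` commuting with `A` has the form `B = A^m · J^l` with `m ∈ ℤ` and
`0 ≤ l < 2k`; that is, `C(A) = ⟨A⟩ × ⟨J⟩`. -/
theorem centralizer_eq_powers_mul_finite_cyclic (n : ℕ)
    (A : Matrix (Fin n) (Fin n) ℤ) (hA : IsUnit A) (hdet : A.det = 1 ∨ A.det = -1)
    (hirr : Irreducible (A.charpoly.map (Int.castRingHom ℚ)))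
    (K : Type) [Field K] [NumberField K] (lam : K)
    (hroot : Polynomial.aeval lam A.charpoly = 0)
    (hgen : IntermediateField.adjoin ℚ {lam} = ⊤)
    (hZl : ∀ u : (𝓞 K)ˣ, (algebraMap (𝓞 K) K (u : 𝓞 K) ∈ Algebra.adjoin ℤ ({lam} : Set K))
      ∧ (algebraMap (𝓞 K) K ((u⁻¹ : (𝓞 K)ˣ) : 𝓞 K) ∈ Algebra.adjoin ℤ ({lam} : Set K)))
    (hfund : ∀ u : (𝓞 K)ˣ, ∃ (m : ℤ) (z : (𝓞 K)ˣ), IsOfFinOrder z ∧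
      algebraMap (𝓞 K) K (u : 𝓞 K) = algebraMap (𝓞 K) K (z : 𝓞 K) * lam ^ m) :
    ∃ (J : (Matrix (Fin n) (Fin n) ℤ)ˣ) (k : ℕ), 0 < k ∧
      A * (J : Matrix (Fin n) (Fin n) ℤ) = (J : Matrix (Fin n) (Fin n) ℤ) * A ∧
      orderOf J = 2 * k ∧ J ^ k = -1 ∧
      ∀ B : (Matrix (Fin n) (Fin n) ℤ)ˣ,
        A * (B : Matrix (Fin n) (Fin n) ℤ) = (B : Matrix (Fin n) (Fin n) ℤ) * A →
        ∃ (m : ℤ) (l : ℕ), l < 2 * k ∧ B = hA.unit ^ m * J ^ l := by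
  classical
  -- basic degree facts
  have hpm : A.charpoly.Monic := A.charpoly_monic
  set pQ := A.charpoly.map (Int.castRingHom ℚ) with hpQ
  have hpQm : pQ.Monic := hpm.map _
  have hdegn : pQ.natDegree = n := by
    rw [hpQ, hpm.natDegree_map, A.charpoly_natDegree_eq_dim, Fintype.card_fin]
  have hn : 0 < n := by
    rcases Nat.eq_zero_or_pos n with h0 | h
    · exfalso
      have : pQ = 1 := hpQm.natDegree_eq_zero.mp (by omega)
      exact hirr.not_isUnit (this ▸ isUnit_one)
    · exact h
  haveI : Nonempty (Fin n) := Fin.pos_iff_nonempty.mp hn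
  have hrootQ : aeval lam pQ = 0 := by
    rw [hpQ, show Int.castRingHom ℚ = algebraMap ℤ ℚ from rfl, aeval_map_algebraMap]
    exact hroot
  have hmin : minpoly ℚ lam = pQ := (minpoly.eq_of_irreducible_of_monic hirr hrootQ hpQm).symm
  have hint : IsIntegral ℚ lam := ⟨pQ, hpQm, by rw [← aeval_def]; exact hrootQ⟩
  have hrankK : Module.finrank ℚ K = n := by
    have h1 := IntermediateField.adjoin.finrank hint
    rw [hmin, hdegn] at h1
    have h2 : Module.finrank ℚ (↥(IntermediateField.adjoin ℚ ({lam} : Set K)))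
        = Module.finrank ℚ K := by
      rw [hgen]
      exact (IntermediateField.topEquiv (F := ℚ) (E := K)).toLinearEquiv.finrank_eq
    rw [← h2, h1]
  -- the algebra map ψ : K → M_n(ℚ)
  set AQ : Matrix (Fin n) (Fin n) ℚ := A.map Int.cast with hAQ
  have hCH : aeval AQ (minpoly ℚ lam) = 0 := by
    rw [hmin, hpQ, ← Matrix.charpoly_map]
    exact Matrix.aeval_self_charpoly _
  let e : AdjoinRoot (minpoly ℚ lam) ≃ₐ[ℚ] K :=
    (IntermediateField.adjoinRootEquivAdjoin ℚ hint).trans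
      ((IntermediateField.equivOfEq hgen).trans IntermediateField.topEquiv)
  have hker : ∀ a : ℚ[X], a ∈ Ideal.span {minpoly ℚ lam} → (Polynomial.aeval AQ) a = 0 := by
    intro a ha
    rw [Ideal.mem_span_singleton] at ha
    obtain ⟨c, rfl⟩ := ha
    rw [_root_.map_mul, hCH, zero_mul]
  let ψ0 : AdjoinRoot (minpoly ℚ lam) →ₐ[ℚ] Matrix (Fin n) (Fin n) ℚ :=
    Ideal.Quotient.liftₐ _ (Polynomial.aeval AQ) hker
  have hψ0mk : ∀ q : ℚ[X], ψ0 (AdjoinRoot.mk (minpoly ℚ lam) q) = Polynomial.aeval AQ q := by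
    intro q
    show Ideal.Quotient.liftₐ (Ideal.span {minpoly ℚ lam}) (Polynomial.aeval AQ) hker
      (Ideal.Quotient.mk (Ideal.span {minpoly ℚ lam}) q) = Polynomial.aeval AQ q
    rw [Ideal.Quotient.liftₐ_apply]
    rfl
  have hψ0root : ψ0 (AdjoinRoot.root (minpoly ℚ lam)) = AQ := by
    rw [← AdjoinRoot.mk_X, hψ0mk, aeval_X]
  let ψ : K →ₐ[ℚ] Matrix (Fin n) (Fin n) ℚ := ψ0.comp e.symm.toAlgHom
  have hψlam : ψ lam = AQ := by
    have h1 : e (AdjoinRoot.root (minpoly ℚ lam)) = lam := by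
      show (IntermediateField.topEquiv
        ((IntermediateField.equivOfEq hgen)
          ((IntermediateField.adjoinRootEquivAdjoin ℚ hint) (AdjoinRoot.root (minpoly ℚ lam))))) = lam
      rw [IntermediateField.adjoinRootEquivAdjoin_apply_root]
      rfl
    have h2 : e.symm lam = AdjoinRoot.root (minpoly ℚ lam) := by
      apply e.injective
      rw [e.apply_symm_apply, h1]
    show ψ0 (e.symm lam) = AQ
    rw [h2, hψ0root]
  have hψinj : Function.Injective ψ := RingHom.injective ψ.toRingHom
  -- the matrix cast ring hom
  set Fm : Matrix (Fin n) (Fin n) ℤ →+* Matrix (Fin n) (Fin n) ℚ := (Int.castRingHom ℚ).mapMatrix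
    with hFm
  have hFmA : Fm A = AQ := by rw [hFm, RingHom.mapMatrix_apply]; rfl
  have hFminj : Function.Injective Fm := by
    intro x y h
    rw [hFm, RingHom.mapMatrix_apply, RingHom.mapMatrix_apply] at h
    exact Matrix.map_injective (fun a b hab => Int.cast_injective hab) h
  -- realization of ℤ[λ] as integer matrices
  have hreal : ∀ x : K, x ∈ Algebra.adjoin ℤ ({lam} : Set K) →
      ∃ M : Matrix (Fin n) (Fin n) ℤ, Fm M = ψ x := by
    intro x hx
    rw [Algebra.adjoin_singleton_eq_range_aeval, AlgHom.mem_range] at hx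
    obtain ⟨q, hq⟩ := hx
    refine ⟨aeval A q, ?_⟩
    have h1 : Fm (aeval A q) = aeval (Fm A) q :=
      (Polynomial.aeval_algHom_apply Fm.toIntAlgHom A q).symm
    have h2 : ψ (aeval lam q) = aeval (ψ lam) q :=
      (Polynomial.aeval_algHom_apply ψ.toRingHom.toIntAlgHom lam q).symm
    rw [h1, ← hq, h2, hψlam, hFmA]
  -- unit group homs
  set θ : (Matrix (Fin n) (Fin n) ℤ)ˣ →* (Matrix (Fin n) (Fin n) ℚ)ˣ :=
    Units.map Fm.toMonoidHom with hθ
  have hθinj : Function.Injective θ := Units.map_injective hFminj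
  set Ψ : Kˣ →* (Matrix (Fin n) (Fin n) ℚ)ˣ := Units.map ψ.toRingHom.toMonoidHom with hΨ
  set ω : (𝓞 K)ˣ →* Kˣ := Units.map (algebraMap (𝓞 K) K).toMonoidHom with hω
  have hωinj : Function.Injective ω := Units.map_injective RingOfIntegers.coe_injective
  have hθval : ∀ B : (Matrix (Fin n) (Fin n) ℤ)ˣ,
      ((θ B : (Matrix (Fin n) (Fin n) ℚ)ˣ) : Matrix (Fin n) (Fin n) ℚ) = Fm B := fun _ => rfl
  have hΨωval : ∀ z : (𝓞 K)ˣ,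
      ((Ψ (ω z) : (Matrix (Fin n) (Fin n) ℚ)ˣ) : Matrix (Fin n) (Fin n) ℚ)
      = ψ (algebraMap (𝓞 K) K (z : 𝓞 K)) := fun _ => rfl
  -- every commuting unit matrix gives a unit of 𝓞 K
  have hkey : ∀ B : (Matrix (Fin n) (Fin n) ℤ)ˣ,
      A * (B : Matrix (Fin n) (Fin n) ℤ) = (B : Matrix (Fin n) (Fin n) ℤ) * A →
      ∃ uO : (𝓞 K)ˣ, θ B = Ψ (ω uO) := by
    intro B hB
    -- B⁻¹ also commutes
    have hBinv : A * ((B⁻¹ : (Matrix (Fin n) (Fin n) ℤ)ˣ) : Matrix (Fin n) (Fin n) ℤ)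
        = ((B⁻¹ : (Matrix (Fin n) (Fin n) ℤ)ˣ) : Matrix (Fin n) (Fin n) ℤ) * A :=
      Commute.units_inv_right (hB : Commute A (B : Matrix (Fin n) (Fin n) ℤ))
    -- commuting with all of ψ
    have hadj : Algebra.adjoin ℚ ({lam} : Set K) = ⊤ := by
      have := congrArg IntermediateField.toSubalgebra hgen
      rwa [IntermediateField.adjoin_simple_toSubalgebra_of_isAlgebraic hint.isAlgebraic,
        IntermediateField.top_toSubalgebra] at this
    have hcommAll : ∀ C : Matrix (Fin n) (Fin n) ℤ, A * C = C * A →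
        ∀ x : K, ψ x * Fm C = Fm C * ψ x := by
      intro C hC x
      let S : Subalgebra ℚ K := (Subalgebra.centralizer ℚ {Fm C}).comap ψ
      have hlamS : lam ∈ S := by
        show ψ lam ∈ Subalgebra.centralizer ℚ {Fm C}
        rw [Subalgebra.mem_centralizer_iff]
        intro g hg
        rw [Set.mem_singleton_iff] at hg
        subst hg
        rw [hψlam, ← hFmA, ← _root_.map_mul, ← _root_.map_mul, hC]
      have hS : S = ⊤ := top_unique (hadj ▸ Algebra.adjoin_le (by
        intro y hy
        rw [Set.mem_singleton_iff] at hy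
        subst hy
        exact hlamS))
      have hxS : x ∈ S := hS ▸ Algebra.mem_top
      have := (Subalgebra.mem_centralizer_iff ℚ).mp hxS
      exact (this (Fm C) rfl).symm
    obtain ⟨u, hu⟩ := aux_centralizer hn hrankK ψ (Fm B)
      (hcommAll B hB)
    obtain ⟨u', hu'⟩ := aux_centralizer hn hrankK ψ (Fm ((B⁻¹ : (Matrix (Fin n) (Fin n) ℤ)ˣ) : Matrix (Fin n) (Fin n) ℤ))
      (hcommAll _ hBinv)
    -- integrality
    have hint_of : ∀ (C : Matrix (Fin n) (Fin n) ℤ) (v : K), ψ v = Fm C → IsIntegral ℤ v := by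
      intro C v hv
      refine ⟨C.charpoly, C.charpoly_monic, ?_⟩
      rw [← aeval_def]
      apply hψinj
      rw [map_zero]
      have h2 : ψ (aeval v C.charpoly) = aeval (ψ v) C.charpoly :=
        (Polynomial.aeval_algHom_apply ψ.toRingHom.toIntAlgHom v C.charpoly).symm
      have h3 : Fm (aeval C C.charpoly) = aeval (Fm C) C.charpoly :=
        (Polynomial.aeval_algHom_apply Fm.toIntAlgHom C C.charpoly).symm
      rw [h2, hv, ← h3, Matrix.aeval_self_charpoly, map_zero]
    have huI : IsIntegral ℤ u := hint_of _ u hu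
    have huI' : IsIntegral ℤ u' := hint_of _ u' hu'
    have hmul1 : u * u' = 1 := by
      apply hψinj
      have h5 : ψ (u * u') = Fm ((B : Matrix (Fin n) (Fin n) ℤ)
          * ((B⁻¹ : (Matrix (Fin n) (Fin n) ℤ)ˣ) : Matrix (Fin n) (Fin n) ℤ)) := by
        rw [_root_.map_mul, _root_.map_mul, hu, hu']
      rw [h5, Units.mul_inv, _root_.map_one, _root_.map_one]
    have hmul2 : u' * u = 1 := by rw [mul_comm]; exact hmul1
    refine ⟨⟨⟨u, huI⟩, ⟨u', huI'⟩, ?_, ?_⟩, ?_⟩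
    · exact RingOfIntegers.coe_injective (by
        show u * u' = 1
        exact hmul1)
    · exact RingOfIntegers.coe_injective (by
        show u' * u = 1
        exact hmul2)
    · apply Units.ext
      rw [hθval, hΨωval]
      exact hu.symm
  -- torsion subgroup
  obtain ⟨ζ, hζ⟩ := IsCyclic.exists_generator (α := ↥(NumberField.Units.torsion K))
  haveI := Fintype.ofFinite ↥(NumberField.Units.torsion K)
  set N := Fintype.card ↥(NumberField.Units.torsion K) with hNdef
  have hNpos : 0 < N := Fintype.card_pos
  have hζord : orderOf ζ = N := by
    rw [orderOf_eq_card_of_forall_mem_zpowers hζ, Nat.card_eq_fintype_card]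
  have hneg1ne : (-1 : (𝓞 K)ˣ) ≠ 1 := by
    intro h
    have h2 : ((-1 : (𝓞 K)ˣ) : 𝓞 K) = 1 := by rw [h]; rfl
    have h3 : ((-1 : 𝓞 K) : K) = algebraMap (𝓞 K) K 1 := congrArg (algebraMap (𝓞 K) K) (by
      simpa using h2)
    simp only [_root_.map_one, map_neg] at h3
    norm_num at h3
  have hneg1 : (-1 : (𝓞 K)ˣ) ∈ NumberField.Units.torsion K :=
    (CommGroup.mem_torsion _).mpr (isOfFinOrder_iff_pow_eq_one.mpr
      ⟨2, two_pos, by rw [pow_two, neg_one_mul, neg_neg]⟩)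
  have h2N : 2 ∣ N := by
    haveI : Fact (Nat.Prime 2) := ⟨Nat.prime_two⟩
    have ht : orderOf (⟨-1, hneg1⟩ : ↥(NumberField.Units.torsion K)) = 2 := by
      apply orderOf_eq_prime
      · apply Subtype.ext
        simp [pow_succ]
      · intro h
        exact hneg1ne (congrArg Subtype.val h)
    exact ht ▸ orderOf_dvd_card
  obtain ⟨k, hNk⟩ := h2N
  have hk0 : 0 < k := by omega
  set ζu : (𝓞 K)ˣ := (ζ : (𝓞 K)ˣ) with hζu
  have hζuord : orderOf ζu = N := by
    rw [← hζord]
    exact orderOf_injective (NumberField.Units.torsion K).subtype Subtype.coe_injective ζ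
  have hζN : ζu ^ N = 1 := by
    rw [← hζuord]
    exact pow_orderOf_eq_one ζu
  have hζhalf : ζu ^ k = -1 := by
    have hsq : (ζu ^ k) ^ 2 = 1 := by
      rw [← pow_mul, mul_comm, ← hNk]
      exact hζN
    have hval : ((ζu ^ k : (𝓞 K)ˣ) : 𝓞 K) ^ 2 = 1 := by
      have := congrArg (Units.val) hsq
      simpa using this
    rcases aux_sq _ hval with h | h
    · exfalso
      have h1 : ζu ^ k = 1 := Units.ext h
      have h2 : orderOf ζu ∣ k := orderOf_dvd_of_pow_eq_one h1
      rw [hζuord] at h2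
      have := Nat.le_of_dvd hk0 h2
      omega
    · exact Units.ext h
  -- construct J
  obtain ⟨hz1, hz2⟩ := hZl ζu
  obtain ⟨Jm, hJm⟩ := hreal _ hz1
  obtain ⟨Jm', hJm'⟩ := hreal _ hz2
  have hJJ' : Jm * Jm' = 1 := by
    apply hFminj
    rw [_root_.map_mul, _root_.map_one, hJm, hJm', ← _root_.map_mul, ← _root_.map_mul]
    rw [show ((ζu : 𝓞 K) * ((ζu⁻¹ : (𝓞 K)ˣ) : 𝓞 K)) = 1 from by
      exact_mod_cast Units.mul_inv ζu]
    simp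
  have hJ'J : Jm' * Jm = 1 := by
    apply hFminj
    rw [_root_.map_mul, _root_.map_one, hJm, hJm', ← _root_.map_mul, ← _root_.map_mul]
    rw [show (((ζu⁻¹ : (𝓞 K)ˣ) : 𝓞 K) * (ζu : 𝓞 K)) = 1 from by
      exact_mod_cast Units.inv_mul ζu]
    simp
  set J : (Matrix (Fin n) (Fin n) ℤ)ˣ := ⟨Jm, Jm', hJJ', hJ'J⟩ with hJ
  have hθJ : θ J = Ψ (ω ζu) := by
    apply Units.ext
    rw [hθval, hΨωval]
    exact hJm
  refine ⟨J, k, hk0, ?_, ?_, ?_, ?_⟩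
  · -- A commutes with J
    apply hFminj
    rw [_root_.map_mul, _root_.map_mul, hFmA]
    show AQ * Fm Jm = Fm Jm * AQ
    rw [hJm, ← hψlam, ← _root_.map_mul, ← _root_.map_mul, mul_comm]
  · -- order of J
    rw [← hNk, ← hζuord]
    calc orderOf J = orderOf (θ J) := (orderOf_injective θ hθinj J).symm
      _ = orderOf (Ψ (ω ζu)) := by rw [hθJ]
      _ = orderOf ζu := by
          rw [orderOf_injective Ψ (Units.map_injective hψinj) (ω ζu),
            orderOf_injective ω hωinj ζu]
  · -- J^k = -1
    apply hθinj
    rw [map_pow, hθJ, ← map_pow Ψ, ← map_pow ω, hζhalf]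
    apply Units.ext
    rw [hΨωval, hθval]
    simp
  · -- decomposition
    intro B hB
    obtain ⟨uO, hθB⟩ := hkey B hB
    obtain ⟨m, z, hzfin, hEq⟩ := hfund uO
    set zT : ↥(NumberField.Units.torsion K) := ⟨z, (CommGroup.mem_torsion _).mpr hzfin⟩
      with hzT
    obtain ⟨j, hj⟩ := Subgroup.mem_zpowers_iff.mp (hζ zT)
    set l : ℕ := (j % (N : ℤ)).toNat with hl
    have hlN : (l : ℤ) = j % (N : ℤ) := by
      rw [hl]
      exact Int.toNat_of_nonneg (Int.emod_nonneg j (by exact_mod_cast hNpos.ne'))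
    have hlltN : l < N := by
      have := Int.emod_lt_of_pos j (by exact_mod_cast hNpos : (0:ℤ) < (N:ℤ))
      omega
    have hζl : ζ ^ (l : ℤ) = ζ ^ j := by
      rw [hlN, ← hζord]
      exact zpow_mod_orderOf ζ j
    have hzul : z = ζu ^ l := by
      have h1 : zT = ζ ^ l := by
        rw [← hj, ← hζl, zpow_natCast]
      have := congrArg (Subtype.val) h1
      rw [hzT] at this
      simpa [Subgroup.coe_pow] using this
    -- lam as a unit
    have hlam0 : lam ≠ 0 := by
      intro h
      have : ψ lam = 0 := by rw [h, map_zero]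
      rw [hψlam] at this
      have hAQunit : IsUnit AQ := by
        rw [← hFmA]
        exact hA.map Fm
      rw [this] at hAQunit
      exact not_isUnit_zero hAQunit
    set lamu : Kˣ := Units.mk0 lam hlam0 with hlamu
    have hθA : θ hA.unit = Ψ lamu := by
      apply Units.ext
      rw [hθval]
      show Fm (hA.unit : Matrix (Fin n) (Fin n) ℤ) = ψ lam
      rw [hA.unit_spec, hFmA, hψlam]
    refine ⟨m, l, hNk ▸ hlltN, ?_⟩
    have hωEq : ω uO = lamu ^ m * (ω ζu) ^ l := by
      apply Units.ext
      have hval1 : ((ω uO : Kˣ) : K) = algebraMap (𝓞 K) K (uO : 𝓞 K) := rfl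
      have hval2 : ((ω ζu : Kˣ) : K) = algebraMap (𝓞 K) K (ζu : 𝓞 K) := rfl
      rw [Units.val_mul, hval1, hEq]
      have h3 : ((lamu ^ m : Kˣ) : K) = lam ^ m := by
        rw [Units.val_zpow_eq_zpow_val]
        rfl
      have h4 : (((ω ζu) ^ l : Kˣ) : K) = algebraMap (𝓞 K) K (z : 𝓞 K) := by
        rw [Units.val_pow_eq_pow_val, hval2, ← map_pow, hzul]
        exact congrArg (algebraMap (𝓞 K) K) (Units.val_pow_eq_pow_val ζu l).symm
      rw [h3, h4, mul_comm]
    apply hθinj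
    rw [hθB, hωEq, _root_.map_mul Ψ, _root_.map_mul θ, map_zpow Ψ, map_zpow θ,
      map_pow Ψ, map_pow θ, hθA, hθJ]
end

section
/- Let A be the 2×2 integer matrix with rows (0, 1) and (1, 5) (the companion matrix of x² − 5x − 1). Then every 2×2 integer matrix B with det B = ±1 and AB = BA is of the form B = ε·A^m for some integer m and some ε ∈ {1, −1}; that is, C(A) = ⟨A⟩ × ⟨−I⟩. -/
open Matrix

/-- The matrix `A = !![0, 1; 1, 5]` (companion matrix of `x² − 5x − 1`) as an element of
`GL(2, ℤ)`, i.e. a unit of the ring of `2 × 2` integer matrices. -/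
def ex15A : (Matrix (Fin 2) (Fin 2) ℤ)ˣ :=
  ⟨!![0, 1; 1, 5], !![-5, 1; 1, 0], by decide, by decide⟩

private abbrev MatZ := Matrix (Fin 2) (Fin 2) ℤ

lemma ex15_val : (ex15A : MatZ) = !![0, 1; 1, 5] := rfl

lemma ex15_form (p q : ℤ) :
    p • (1 : MatZ) + q • (ex15A : MatZ) = !![p, q; q, p + 5*q] := by
  rw [ex15_val]
  ext i j
  fin_cases i <;> fin_cases j <;>
    simp only [Matrix.add_apply, Matrix.smul_apply, Matrix.one_apply, smul_eq_mul,
      Matrix.cons_val', Matrix.cons_val_zero, Matrix.cons_val_one, Matrix.head_cons,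
      Matrix.empty_val', Matrix.cons_val_fin_one, Matrix.head_fin_const] <;>
    norm_num [mul_comm]

lemma ex15_keyT (p q : ℤ) :
    ((q - 5*p) • (1 : MatZ) + p • (ex15A : MatZ)) * (ex15A : MatZ)
      = p • (1 : MatZ) + q • (ex15A : MatZ) := by
  rw [ex15_form, ex15_form, ex15_val, Matrix.mul_fin_two]
  ext i j
  fin_cases i <;> fin_cases j <;> simp <;> ring

lemma ex15_keyS (p q : ℤ) :
    (q • (1 : MatZ) + (p + 5*q) • (ex15A : MatZ)) * ((ex15A⁻¹ : MatZˣ) : MatZ)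
      = p • (1 : MatZ) + q • (ex15A : MatZ) := by
  rw [ex15_form, ex15_form, show ((ex15A⁻¹ : MatZˣ) : MatZ) = !![-5,1;1,0] from rfl,
    Matrix.mul_fin_two]
  ext i j
  fin_cases i <;> fin_cases j <;> simp <;> ring

lemma ex15_aux : ∀ n : ℕ, ∀ p q : ℤ, q.natAbs = n →
    (p^2 + 5*p*q - q^2 = 1 ∨ p^2 + 5*p*q - q^2 = -1) →
    ∃ m ε : ℤ, (ε = 1 ∨ ε = -1) ∧
      p • (1 : MatZ) + q • (ex15A : MatZ)
        = ε • ((ex15A ^ m : MatZˣ) : MatZ) := by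
  intro n
  induction n using Nat.strong_induction_on with
  | _ n ih =>
    intro p q hn hnorm
    obtain ⟨ee, hee, he⟩ : ∃ ee : ℤ, (ee = 1 ∨ ee = -1) ∧ p^2 + 5*p*q - q^2 = ee := by
      rcases hnorm with h | h
      exacts [⟨1, Or.inl rfl, h⟩, ⟨-1, Or.inr rfl, h⟩]
    have heeb : -1 ≤ ee ∧ ee ≤ 1 := by rcases hee with h | h <;> simp [h]
    by_cases hq : q = 0
    · subst hq
      have hp : p = 1 ∨ p = -1 := by
        have h0 : (p - 1) * (p + 1) = 0 := by rcases hee with h | h <;> nlinarith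
        rcases mul_eq_zero.mp h0 with h | h
        · left; linarith
        · right; linarith
      exact ⟨0, p, hp, by simp⟩
    · have hq1 : (1:ℤ) ≤ q^2 := by
        have h1 := Int.one_le_abs hq
        nlinarith [sq_abs q, abs_nonneg q]
      have hs2 : (2*p + 5*q)^2 = 29*q^2 + 4*ee := by rw [← he]; ring
      have h1 : ((2*p + 5*q)*q)^2 = 29*q^4 + 4*ee*q^2 := by
        have h2 : ((2*p + 5*q)*q)^2 = (2*p + 5*q)^2 * q^2 := by ring
        rw [h2, hs2]; ring
      have hq4 : q^2 ≤ q^4 := by nlinarith [hq1, sq_nonneg q]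
      rcases le_or_gt 0 ((2*p + 5*q)*q) with hsq | hsq
      · -- multiply by A⁻¹ : descend to (q - 5p, p)
        have h5 : 5*q^2 ≤ (2*p + 5*q)*q := by
          by_contra h
          push_neg at h
          nlinarith [h1, hq4, heeb.1, hsq, sq_nonneg q]
        have h6 : (2*p + 5*q)*q ≤ 6*q^2 - 1 := by
          by_contra h
          push_neg at h
          nlinarith [h1, hq4, heeb.2, hq1, sq_nonneg q]
        have hpq0 : 0 ≤ 2*(p*q) := by nlinarith [h5]
        have hup : 2*(p*q) ≤ q^2 - 1 := by nlinarith [h6]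
        have hp2 : p^2 < q^2 := by
          nlinarith [mul_nonneg hpq0 (by linarith : (0:ℤ) ≤ q^2 - 1 - 2*(p*q)), hq1,
            sq_nonneg (p*q)]
        have hlt : p.natAbs < n := by
          rw [← hn]
          have habs : |p| < |q| := by
            nlinarith [sq_abs p, sq_abs q, abs_nonneg p, abs_nonneg q]
          have h7 := Int.natAbs_lt_natAbs_of_nonneg_of_lt (abs_nonneg p) habs
          simpa [Int.natAbs_abs] using h7
        have hnorm' : (q - 5*p)^2 + 5*(q - 5*p)*p - p^2 = 1 ∨
            (q - 5*p)^2 + 5*(q - 5*p)*p - p^2 = -1 := by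
          have hval : (q - 5*p)^2 + 5*(q - 5*p)*p - p^2 = -ee := by rw [← he]; ring
          rcases hee with h | h
          · right; rw [hval, h]
          · left; rw [hval, h]; norm_num
        obtain ⟨m, ε, hε, hB⟩ := ih p.natAbs hlt (q - 5*p) p rfl hnorm'
        refine ⟨m + 1, ε, hε, ?_⟩
        rw [← ex15_keyT p q, hB, smul_mul_assoc, ← Units.val_mul, ← _root_.zpow_add_one]
      · -- multiply by A : descend to (q, p + 5q)
        have h5 : 5*q^2 ≤ -((2*p + 5*q)*q) := by
          by_contra h
          push_neg at h
          nlinarith [h1, hq4, heeb.1, hsq, sq_nonneg q]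
        have hexp2 : 4*(p + 5*q)^2 = 54*q^2 + 4*ee + 10*((2*p + 5*q)*q) := by
          rw [← he]; ring
        have ht2 : (p + 5*q)^2 < q^2 := by
          rcases hee with h | h
          · have h5' : 5*q^2 + 1 ≤ -((2*p + 5*q)*q) := by
              rcases lt_or_eq_of_le h5 with h' | h'
              · linarith
              · exfalso
                have hsqv : (2*p + 5*q)*q = -(5*q^2) := by linarith
                have hcon : 25*q^4 = 29*q^4 + 4*ee*q^2 := by rw [← h1, hsqv]; ring
                rw [h] at hcon
                linarith [hq4, hq1]
            linarith [hexp2, h5', h]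
          · linarith [hexp2, h5, h]
        have hlt : (p + 5*q).natAbs < n := by
          rw [← hn]
          have habs : |p + 5*q| < |q| := by
            nlinarith [sq_abs (p + 5*q), sq_abs q, abs_nonneg (p + 5*q), abs_nonneg q]
          have h7 := Int.natAbs_lt_natAbs_of_nonneg_of_lt (abs_nonneg (p + 5*q)) habs
          simpa [Int.natAbs_abs] using h7
        have hnorm' : q^2 + 5*q*(p + 5*q) - (p + 5*q)^2 = 1 ∨
            q^2 + 5*q*(p + 5*q) - (p + 5*q)^2 = -1 := by
          have hval : q^2 + 5*q*(p + 5*q) - (p + 5*q)^2 = -ee := by rw [← he]; ring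
          rcases hee with h | h
          · right; rw [hval, h]
          · left; rw [hval, h]; norm_num
        obtain ⟨m, ε, hε, hB⟩ := ih (p + 5*q).natAbs hlt q (p + 5*q) rfl hnorm'
        refine ⟨m - 1, ε, hε, ?_⟩
        rw [← ex15_keyS p q, hB, smul_mul_assoc, ← Units.val_mul, ← _root_.zpow_sub_one]

/-- For the companion matrix `A` of `x² − 5x − 1`, every `B ∈ GL(2, ℤ)` commuting with `A`
is of the form `B = ε·A^m` with `m ∈ ℤ` and `ε = ±1`; that is, `C(A) = ⟨A⟩ × ⟨−I⟩`. -/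
theorem centralizer_ex15 (B : Matrix (Fin 2) (Fin 2) ℤ)
    (hdet : B.det = 1 ∨ B.det = -1)
    (hcomm : (ex15A : Matrix (Fin 2) (Fin 2) ℤ) * B
      = B * (ex15A : Matrix (Fin 2) (Fin 2) ℤ)) :
    ∃ (m : ℤ) (ε : ℤ), (ε = 1 ∨ ε = -1) ∧
      B = ε • ((ex15A ^ m : (Matrix (Fin 2) (Fin 2) ℤ)ˣ) : Matrix (Fin 2) (Fin 2) ℤ) := by
  rw [ex15_val] at hcomm
  have h00 := congrFun (congrFun hcomm 0) 0
  have h01 := congrFun (congrFun hcomm 0) 1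
  simp [Matrix.mul_apply, Fin.sum_univ_two] at h00 h01
  set p := B 0 0 with hp
  set q := B 0 1 with hqdef
  have h10 : B 1 0 = q := by linarith
  have h11 : B 1 1 = p + 5*q := by linarith
  have hBeq : B = p • (1 : MatZ) + q • (ex15A : MatZ) := by
    rw [ex15_form]
    ext i j
    fin_cases i <;> fin_cases j <;> simp [h10, h11] <;> rfl
  have hnorm : p^2 + 5*p*q - q^2 = 1 ∨ p^2 + 5*p*q - q^2 = -1 := by
    rw [Matrix.det_fin_two] at hdet
    rcases hdet with h | h
    · left; rw [← h, h10, h11]; ring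
    · right; rw [← h, h10, h11]; ring
  obtain ⟨m, ε, hε, h⟩ := ex15_aux q.natAbs p q rfl hnorm
  exact ⟨m, ε, hε, by rw [hBeq, h]⟩
end

section
/- Let A be the 3×3 integer matrix with rows (0, 1, 0), (0, 0, 1), (1, 0, 1) (the companion matrix of x³ − x² − 1). Then every 3×3 integer matrix B with det B = ±1 and AB = BA is of the form B = ε·A^m for some integer m and some ε ∈ {1, −1}; that is, C(A) = ⟨A⟩ × ⟨−I⟩. -/
open Matrix

/-- The matrix `A` with rows `(0,1,0), (0,0,1), (1,0,1)` (companion matrix of `x³ − x² − 1`)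
as an element of `GL(3, ℤ)`, i.e. a unit of the ring of `3 × 3` integer matrices. -/
def ex16A : (Matrix (Fin 3) (Fin 3) ℤ)ˣ :=
  ⟨!![0, 1, 0; 0, 0, 1; 1, 0, 1], !![0, -1, 1; 1, 0, 0; 0, 1, 0], by decide, by decide⟩

/-- Norm form: determinant of `a•I + b•A + c•A²`. -/
def exNv (a b c : ℤ) : ℤ :=
  a^3 + a^2*b + a^2*c - 3*a*b*c - 2*a*c^2 + b^3 + b^2*c + c^3

/-- The matrix `a•I + b•A + c•A²`, written out explicitly. -/
def exFm (t : ℤ × ℤ × ℤ) : Matrix (Fin 3) (Fin 3) ℤ :=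
  !![t.1, t.2.1, t.2.2; t.2.2, t.1, t.2.1 + t.2.2;
     t.2.1 + t.2.2, t.2.2, t.1 + t.2.1 + t.2.2]

/-- Multiplication by `A` on coefficient triples. -/
def exE : Equiv.Perm (ℤ × ℤ × ℤ) where
  toFun t := (t.2.2, t.1, t.2.1 + t.2.2)
  invFun t := (t.2.1, t.2.2 - t.1, t.1)
  left_inv := by rintro ⟨a, b, c⟩; simp
  right_inv := by rintro ⟨a, b, c⟩; simp

lemma exFm_E (t : ℤ × ℤ × ℤ) :
    exFm (exE t) = exFm t * (ex16A : Matrix (Fin 3) (Fin 3) ℤ) := by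
  obtain ⟨a, b, c⟩ := t
  ext i j
  fin_cases i <;> fin_cases j <;>
    simp [exFm, exE, ex16A, Matrix.mul_apply, Fin.sum_univ_three, Matrix.vecHead, Matrix.vecTail] <;> ring

lemma exFm_Esymm (t : ℤ × ℤ × ℤ) :
    exFm (exE.symm t) = exFm t * ((ex16A⁻¹ : (Matrix (Fin 3) (Fin 3) ℤ)ˣ) : Matrix (Fin 3) (Fin 3) ℤ) := by
  obtain ⟨a, b, c⟩ := t
  ext i j
  fin_cases i <;> fin_cases j <;>
    simp [exFm, exE, ex16A, Matrix.mul_apply, Fin.sum_univ_three, Matrix.vecHead, Matrix.vecTail] <;> ring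

lemma exNv_E (t : ℤ × ℤ × ℤ) : exNv (exE t).1 (exE t).2.1 (exE t).2.2 = exNv t.1 t.2.1 t.2.2 := by
  obtain ⟨a, b, c⟩ := t; simp [exNv, exE]; ring

lemma exNv_Esymm (t : ℤ × ℤ × ℤ) :
    exNv (exE.symm t).1 (exE.symm t).2.1 (exE.symm t).2.2 = exNv t.1 t.2.1 t.2.2 := by
  obtain ⟨a, b, c⟩ := t; simp [exNv, exE]; ring

lemma exDet_fm (t : ℤ × ℤ × ℤ) : (exFm t).det = exNv t.1 t.2.1 t.2.2 := by
  obtain ⟨a, b, c⟩ := t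
  simp [exFm, exNv, Matrix.det_fin_three]; ring
lemma exFm_zpow (m : ℤ) (t : ℤ × ℤ × ℤ) :
    exFm ((exE ^ m) t) = exFm t * ((ex16A ^ m : (Matrix (Fin 3) (Fin 3) ℤ)ˣ) : Matrix (Fin 3) (Fin 3) ℤ) := by
  induction m using Int.induction_on generalizing t with
  | zero => simp
  | succ n ih =>
      have hE : (exE ^ ((n : ℤ) + 1)) t = (exE ^ (n : ℤ)) (exE t) := by
        rw [_root_.zpow_add_one]; rfl
      have hu : ex16A ^ ((n : ℤ) + 1) = ex16A ^ (n : ℤ) * ex16A := _root_.zpow_add_one _ _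
      have hc : (ex16A : Matrix (Fin 3) (Fin 3) ℤ) * ((ex16A ^ (n : ℤ) : _ˣ) : Matrix (Fin 3) (Fin 3) ℤ)
          = ((ex16A ^ (n : ℤ) : _ˣ) : Matrix (Fin 3) (Fin 3) ℤ) * (ex16A : Matrix (Fin 3) (Fin 3) ℤ) := by
        have := ((Commute.refl ex16A).zpow_right (n : ℤ)).symm.eq
        calc (ex16A : Matrix (Fin 3) (Fin 3) ℤ) * ((ex16A ^ (n : ℤ) : _ˣ) : Matrix (Fin 3) (Fin 3) ℤ)
            = ((ex16A * ex16A ^ (n : ℤ) : _ˣ) : Matrix (Fin 3) (Fin 3) ℤ) := (Units.val_mul _ _).symm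
          _ = ((ex16A ^ (n : ℤ) * ex16A : _ˣ) : Matrix (Fin 3) (Fin 3) ℤ) := by rw [this]
          _ = _ := Units.val_mul _ _
      rw [hE, ih (exE t) ,exFm_E, hu, Units.val_mul, mul_assoc, hc]
  | pred n ih =>
      have hE : (exE ^ ((-n : ℤ) - 1)) t = (exE ^ (-n : ℤ)) (exE.symm t) := by
        rw [_root_.zpow_sub_one]; rfl
      have hu : ex16A ^ ((-n : ℤ) - 1) = ex16A ^ (-n : ℤ) * ex16A⁻¹ := _root_.zpow_sub_one _ _
      have hc : ((ex16A⁻¹ : _ˣ) : Matrix (Fin 3) (Fin 3) ℤ) * ((ex16A ^ (-n : ℤ) : _ˣ) : Matrix (Fin 3) (Fin 3) ℤ)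
          = ((ex16A ^ (-n : ℤ) : _ˣ) : Matrix (Fin 3) (Fin 3) ℤ) * ((ex16A⁻¹ : _ˣ) : Matrix (Fin 3) (Fin 3) ℤ) := by
        have := (((Commute.refl ex16A).zpow_right (-n : ℤ)).inv_left).eq
        calc ((ex16A⁻¹ : _ˣ) : Matrix (Fin 3) (Fin 3) ℤ) * ((ex16A ^ (-n : ℤ) : _ˣ) : Matrix (Fin 3) (Fin 3) ℤ)
            = ((ex16A⁻¹ * ex16A ^ (-n : ℤ) : _ˣ) : Matrix (Fin 3) (Fin 3) ℤ) := (Units.val_mul _ _).symm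
          _ = ((ex16A ^ (-n : ℤ) * ex16A⁻¹ : _ˣ) : Matrix (Fin 3) (Fin 3) ℤ) := by rw [this]
          _ = _ := Units.val_mul _ _
      rw [hE, ih (exE.symm t), exFm_Esymm, hu, Units.val_mul, mul_assoc, hc]
def exXv (α : ℝ) (t : ℤ × ℤ × ℤ) : ℝ := t.1 + t.2.1 * α + t.2.2 * α^2

lemma exNv_zpow (m : ℤ) (t : ℤ × ℤ × ℤ) :
    exNv ((exE ^ m) t).1 ((exE ^ m) t).2.1 ((exE ^ m) t).2.2 = exNv t.1 t.2.1 t.2.2 := by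
  have h1 : ∀ s : ℤ × ℤ × ℤ, exNv (exE s).1 (exE s).2.1 (exE s).2.2 = exNv s.1 s.2.1 s.2.2 := by
    rintro ⟨a, b, c⟩; simp [exNv, exE]; ring
  have h2 : ∀ s : ℤ × ℤ × ℤ, exNv (exE.symm s).1 (exE.symm s).2.1 (exE.symm s).2.2 = exNv s.1 s.2.1 s.2.2 := by
    rintro ⟨a, b, c⟩; simp [exNv, exE]; ring
  induction m using Int.induction_on generalizing t with
  | zero => simp
  | succ n ih =>
      have hE : (exE ^ ((n : ℤ) + 1)) t = (exE ^ (n : ℤ)) (exE t) := by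
        rw [_root_.zpow_add_one]; rfl
      rw [hE, ih (exE t), h1]
  | pred n ih =>
      have hE : (exE ^ ((-n : ℤ) - 1)) t = (exE ^ (-n : ℤ)) (exE.symm t) := by
        rw [_root_.zpow_sub_one]; rfl
      rw [hE, ih (exE.symm t), h2]

lemma exXv_zpow (α : ℝ) (h3 : α^3 = α^2 + 1) (hα : α ≠ 0) (m : ℤ) (t : ℤ × ℤ × ℤ) :
    exXv α ((exE ^ m) t) = α ^ m * exXv α t := by
  have h1 : ∀ s : ℤ × ℤ × ℤ, exXv α (exE s) = α * exXv α s := by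
    rintro ⟨a, b, c⟩; simp only [exXv, exE, Equiv.coe_fn_mk]; push_cast; linear_combination (-c : ℝ) * h3
  have h2 : ∀ s : ℤ × ℤ × ℤ, exXv α (exE.symm s) = α⁻¹ * exXv α s := by
    rintro ⟨a, b, c⟩
    have : α * exXv α (exE.symm (a, b, c)) = α * (α⁻¹ * exXv α (a, b, c)) := by
      rw [← mul_assoc, mul_inv_cancel₀ hα, one_mul]
      simp only [exXv, exE, Equiv.symm, Equiv.coe_fn_mk, Equiv.coe_fn_symm_mk]
      push_cast; linear_combination (a : ℝ) * h3
    exact mul_left_cancel₀ hα this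
  induction m using Int.induction_on generalizing t with
  | zero => simp [exXv]
  | succ n ih =>
      have hE : (exE ^ ((n : ℤ) + 1)) t = (exE ^ (n : ℤ)) (exE t) := by
        rw [_root_.zpow_add_one]; rfl
      rw [hE, ih (exE t), h1, zpow_add_one₀ hα]; ring
  | pred n ih =>
      have hE : (exE ^ ((-n : ℤ) - 1)) t = (exE ^ (-n : ℤ)) (exE.symm t) := by
        rw [_root_.zpow_sub_one]; rfl
      rw [hE, ih (exE.symm t), h2, zpow_sub_one₀ hα]; ring

lemma exFinCheck : ∀ a ∈ Finset.Icc (-1 : ℤ) 1, ∀ b ∈ Finset.Icc (-3 : ℤ) 3, ∀ c ∈ Finset.Icc (-2 : ℤ) 2,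
    (exNv a b c = 1 ∨ exNv a b c = -1) →
    -1 ≤ 3*a + b + c → 3*a + b + c ≤ 3 → 0 ≤ a + b + 4*c → a + b + 4*c ≤ 4 →
    1 ≤ a + 4*b + 5*c → a + 4*b + 5*c ≤ 5 →
    ((a, b, c) = ((0 : ℤ), (-1 : ℤ), (1 : ℤ)) ∨ (a, b, c) = (1, 0, 0) ∨
      (a, b, c) = (0, 1, 0) ∨ (a, b, c) = (0, 0, 1)) := by decide
set_option maxHeartbeats 1000000 in
lemma exAnalytic (α : ℝ) (h3 : α^3 = α^2 + 1) (hlo : (1.42 : ℝ) ≤ α) (hhi : α ≤ 1.73)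
    (a b c : ℤ) (hN : exNv a b c = 1 ∨ exNv a b c = -1) :
    exXv α (a, b, c) ≠ 0 ∧
    (1 ≤ exXv α (a, b, c) → exXv α (a, b, c) < α →
      (-1 ≤ 3*a + b + c ∧ 3*a + b + c ≤ 3 ∧ 0 ≤ a + b + 4*c ∧ a + b + 4*c ≤ 4 ∧
        1 ≤ a + 4*b + 5*c ∧ a + 4*b + 5*c ≤ 5)) := by
  have hα0 : (0:ℝ) < α := by linarith
  have hd : (0:ℝ) < 1/α - (1-α)^2/4 := by
    rw [sub_pos, div_lt_div_iff₀ (by norm_num) hα0]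
    nlinarith
  set d : ℝ := Real.sqrt (1/α - (1-α)^2/4) with hdd
  set K : ℂ := ⟨(1-α)/2, d⟩ with hK
  set L : ℂ := (starRingEnd ℂ) K with hL
  set J : ℂ := (α : ℂ) with hJ
  have hsum : K + L = ((1-α : ℝ) : ℂ) := by
    rw [hL, Complex.add_conj]
    norm_cast
    show 2*((1-α)/2) = 1-α
    ring
  have hnsK : Complex.normSq K = 1/α := by
    rw [hK, Complex.normSq_mk, hdd, Real.mul_self_sqrt hd.le]; ring
  have hprodβ : K * L = ((1/α : ℝ) : ℂ) := by
    rw [hL, Complex.mul_conj, hnsK]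
  have hA3 : J^3 = J^2 + 1 := by rw [hJ]; exact_mod_cast h3
  have hAne : J ≠ 0 := by rw [hJ]; exact_mod_cast hα0.ne'
  have he1 : J + K + L = 1 := by
    rw [add_assoc, hsum, hJ]; push_cast; ring
  have he3 : J * (K * L) = 1 := by
    rw [hprodβ, hJ]; push_cast; field_simp; exact div_self (by exact_mod_cast hα0.ne')
  have he2 : J*K + J*L + K*L = 0 := by
    have h' : J*K + J*L + K*L = J*(K+L) + K*L := by ring
    rw [h', hsum, hprodβ, hJ]; push_cast
    have hα' : (α:ℂ) ≠ 0 := by exact_mod_cast hα0.ne'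
    field_simp
    linear_combination -hA3
  set x : ℝ := exXv α (a, b, c) with hx
  set z : ℂ := (a:ℂ) + b*K + c*K^2 with hz
  set w : ℂ := (a:ℂ) + b*L + c*L^2 with hw
  have hXdef : ((x : ℝ) : ℂ) = (a:ℂ) + b*J + c*J^2 := by
    rw [hx, hJ]; simp only [exXv]; push_cast; ring
  have hwz : w = (starRingEnd ℂ) z := by
    rw [hw, hz, hL]; simp [map_add, _root_.map_mul, map_pow]
  have hp2 : J^2 + K^2 + L^2 = 1 := by
    linear_combination (J+K+L+1)*he1 - 2*he2
  have hp3 : J^3 + K^3 + L^3 = 4 := by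
    linear_combination ((J+K+L)^2+(J+K+L)+1)*he1 - 3*(J+K+L)*he2 + 3*he3
  have hp4 : J^4 + K^4 + L^4 = 5 := by
    linear_combination ((J+K+L)^3+(J+K+L)^2+(J+K+L)+1+4*(J*(K*L)))*he1
      + (2*(J*K+J*L+K*L)-4*(J+K+L)^2)*he2 + 4*he3
  have hprodN : ((x : ℝ) : ℂ) * z * w = ((exNv a b c : ℤ) : ℂ) := by
    rw [hXdef, hz, hw]; simp only [exNv]; push_cast
    linear_combination ((a:ℂ)^2*b + a^2*c*((J+K+L)+1) - 2*a*c^2*(J*(K*L)) + b^2*c*(J*(K*L))) * he1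
      + (-2*(a:ℂ)^2*c + a*b^2 + a*b*c*(J+K+L) + a*c^2*(J*K+J*L+K*L) + b*c^2*(J*(K*L))) * he2
      + ((b:ℂ)^3 - 3*(a:ℂ)*b*c - 2*a*c^2 + b^2*c + c^3*((J*(K*L))+1)) * he3
  have ht0 : ((x : ℝ) : ℂ) + z + w = ((3*a + b + c : ℤ) : ℂ) := by
    rw [hXdef, hz, hw]; push_cast
    linear_combination (b:ℂ)*he1 + (c:ℂ)*hp2
  have ht1 : ((x : ℝ) : ℂ)*J + z*K + w*L = ((a + b + 4*c : ℤ) : ℂ) := by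
    rw [hXdef, hz, hw]; push_cast
    linear_combination (a:ℂ)*he1 + (b:ℂ)*hp2 + (c:ℂ)*hp3
  have ht2 : ((x : ℝ) : ℂ)*J^2 + z*K^2 + w*L^2 = ((a + 4*b + 5*c : ℤ) : ℂ) := by
    rw [hXdef, hz, hw]; push_cast
    linear_combination (a:ℂ)*hp2 + (b:ℂ)*hp3 + (c:ℂ)*hp4
  constructor
  · intro h0
    have h00 : ((exNv a b c : ℤ) : ℂ) = 0 := by rw [← hprodN, h0]; simp
    have : exNv a b c = 0 := by exact_mod_cast h00
    omega
  intro hx1 hx2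
  -- norm equation
  have habs : x * ‖z‖ ^ 2 = 1 := by
    have h1 := congrArg (fun u : ℂ => ‖u‖) hprodN
    rw [norm_mul, norm_mul, hwz, Complex.norm_conj, Complex.norm_real, Real.norm_eq_abs,
      abs_of_pos (by linarith : (0:ℝ) < x)] at h1
    have h2 : ‖((exNv a b c : ℤ) : ℂ)‖ = 1 := by
      rcases hN with h | h <;> rw [h] <;> simp
    rw [h2] at h1; nlinarith [h1]
  have hzabs : ‖z‖ ≤ 1 := by nlinarith [norm_nonneg z, hx1]
  have hKabs : ‖K‖ ≤ 1 := by
    have h1 : ‖K‖ ^ 2 = 1/α := by rw [Complex.sq_norm, hnsK]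
    have h2 : 1/α ≤ 1 := by rw [div_le_one hα0]; linarith
    nlinarith [norm_nonneg K]
  have hzK : ∀ k : ℕ, ‖z * K ^ k‖ ≤ 1 := by
    intro k
    rw [norm_mul, norm_pow]
    have h1 : ‖K‖ ^ k ≤ 1 := pow_le_one₀ (norm_nonneg K) hKabs
    have h2 : (0:ℝ) ≤ ‖K‖ ^ k := pow_nonneg (norm_nonneg K) k
    nlinarith [norm_nonneg z]
  have hrb : ∀ k : ℕ, |(z * K ^ k).re| ≤ 1 := fun k =>
    le_trans (Complex.abs_re_le_norm _) (hzK k)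
  -- real trace equations
  have hr0 : x + 2*(z*K^0).re = ((3*a + b + c : ℤ) : ℝ) := by
    have h1 := ht0
    rw [hwz, add_assoc, Complex.add_conj] at h1
    have h2 : (z*K^0).re = z.re := by simp
    rw [h2]
    exact_mod_cast h1
  have hr1 : x*α + 2*(z*K^1).re = ((a + b + 4*c : ℤ) : ℝ) := by
    have h1 := ht1
    have hwL : w * L = (starRingEnd ℂ) (z * K) := by
      rw [hwz, hL, _root_.map_mul]
    rw [hwL, add_assoc, Complex.add_conj, hJ] at h1
    have h2 : ((x:ℝ):ℂ) * ((α:ℝ):ℂ) = (((x*α : ℝ)):ℂ) := by push_cast; ring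
    rw [h2] at h1
    rw [pow_one]
    exact_mod_cast h1
  have hr2 : x*α^2 + 2*(z*K^2).re = ((a + 4*b + 5*c : ℤ) : ℝ) := by
    have h1 := ht2
    have hwL : w * L^2 = (starRingEnd ℂ) (z * K^2) := by
      rw [hwz, hL, _root_.map_mul, map_pow]
    rw [hwL, add_assoc, Complex.add_conj, hJ] at h1
    have h2 : ((x:ℝ):ℂ) * ((α:ℝ):ℂ)^2 = (((x*α^2 : ℝ)):ℂ) := by push_cast; ring
    rw [h2] at h1
    exact_mod_cast h1
  have hb0 := abs_le.mp (hrb 0)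
  have hb1 := abs_le.mp (hrb 1)
  have hb2 := abs_le.mp (hrb 2)
  -- numeric bounds
  have hxu : x < 1.73 := by linarith
  have hα2l : (1.42 : ℝ)*1.42 ≤ α^2 := by
    rw [pow_two]; exact mul_le_mul hlo hlo (by norm_num) (by linarith)
  have hα2u : α^2 ≤ (1.73 : ℝ)*1.73 := by
    rw [pow_two]; exact mul_le_mul hhi hhi (by linarith) (by norm_num)
  have hxa1 : α ≤ x*α := le_mul_of_one_le_left hα0.le hx1
  have hxa2 : x*α < α^2 := by
    rw [pow_two]; exact mul_lt_mul_of_pos_right hx2 hα0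
  have hxb1 : α^2 ≤ x*α^2 := le_mul_of_one_le_left (by positivity) hx1
  have hxb2 : x*α^2 < α^3 := by
    rw [show α^3 = α*α^2 by ring]
    exact mul_lt_mul_of_pos_right hx2 (by positivity)
  have hα3 : α^3 = α^2 + 1 := h3
  have c0l : (-2 : ℝ) < ((3*a + b + c : ℤ) : ℝ) := by linarith
  have c0u : ((3*a + b + c : ℤ) : ℝ) < 4 := by linarith
  have c1l : (-1 : ℝ) < ((a + b + 4*c : ℤ) : ℝ) := by linarith
  have c1u : ((a + b + 4*c : ℤ) : ℝ) < 5 := by linarith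
  have c2l : (0 : ℝ) < ((a + 4*b + 5*c : ℤ) : ℝ) := by linarith
  have c2u : ((a + 4*b + 5*c : ℤ) : ℝ) < 6 := by linarith
  have i0l : (-2 : ℤ) < 3*a + b + c := by exact_mod_cast c0l
  have i0u : (3*a + b + c : ℤ) < 4 := by exact_mod_cast c0u
  have i1l : (-1 : ℤ) < a + b + 4*c := by exact_mod_cast c1l
  have i1u : (a + b + 4*c : ℤ) < 5 := by exact_mod_cast c1u
  have i2l : (0 : ℤ) < a + 4*b + 5*c := by exact_mod_cast c2l
  have i2u : (a + 4*b + 5*c : ℤ) < 6 := by exact_mod_cast c2u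
  omega
/-- For the companion matrix `A` of `x³ − x² − 1`, every `B ∈ GL(3, ℤ)` commuting with `A`
is of the form `B = ε·A^m` with `m ∈ ℤ` and `ε = ±1`; that is, `C(A) = ⟨A⟩ × ⟨−I⟩`. -/
theorem centralizer_ex16 (B : Matrix (Fin 3) (Fin 3) ℤ)
    (hdet : B.det = 1 ∨ B.det = -1)
    (hcomm : (ex16A : Matrix (Fin 3) (Fin 3) ℤ) * B
      = B * (ex16A : Matrix (Fin 3) (Fin 3) ℤ)) :
    ∃ (m : ℤ) (ε : ℤ), (ε = 1 ∨ ε = -1) ∧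
      B = ε • ((ex16A ^ m : (Matrix (Fin 3) (Fin 3) ℤ)ˣ) : Matrix (Fin 3) (Fin 3) ℤ) := by
  -- Step 1: `B` is a polynomial in `A` with integer coefficients.
  have hB : B = exFm (B 0 0, B 0 1, B 0 2) := by
    have h : ∀ i j, ((ex16A : Matrix (Fin 3) (Fin 3) ℤ) * B) i j
        = (B * (ex16A : Matrix (Fin 3) (Fin 3) ℤ)) i j := fun i j => by rw [hcomm]
    have h00 := h 0 0
    have h01 := h 0 1
    have h02 := h 0 2
    have h10 := h 1 0
    have h11 := h 1 1
    have h12 := h 1 2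
    have h20 := h 2 0
    have h21 := h 2 1
    have h22 := h 2 2
    simp [ex16A, Matrix.mul_apply, Fin.sum_univ_three, Matrix.vecHead, Matrix.vecTail]
      at h00 h01 h02 h10 h11 h12 h20 h21 h22
    ext i j
    fin_cases i <;> fin_cases j <;> simp [exFm] <;> omega
  set t0 : ℤ × ℤ × ℤ := (B 0 0, B 0 1, B 0 2) with ht0
  have hdet2 : exNv t0.1 t0.2.1 t0.2.2 = 1 ∨ exNv t0.1 t0.2.1 t0.2.2 = -1 := by
    rw [hB] at hdet; rwa [exDet_fm] at hdet
  -- Step 2: the real root of `x³ = x² + 1`.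
  obtain ⟨α, hlo, hhi, hα3⟩ : ∃ α : ℝ, (1.42 : ℝ) ≤ α ∧ α ≤ 1.73 ∧ α^3 = α^2 + 1 := by
    have hc : ContinuousOn (fun x : ℝ => x^3 - x^2 - 1) (Set.Icc 1.42 1.73) :=
      (((continuous_pow 3).sub (continuous_pow 2)).sub continuous_const).continuousOn
    have him := intermediate_value_Icc (by norm_num : (1.42:ℝ) ≤ 1.73) hc
    have h0 : (0:ℝ) ∈ Set.Icc ((1.42:ℝ)^3 - 1.42^2 - 1) ((1.73:ℝ)^3 - 1.73^2 - 1) := by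
      constructor <;> norm_num
    obtain ⟨α, hmem, hval⟩ := him h0
    exact ⟨α, hmem.1, hmem.2, by simp only at hval; linarith [hval]⟩
  have hα0 : (0:ℝ) < α := by linarith
  have hx0 : exXv α t0 ≠ 0 :=
    (exAnalytic α hα3 hlo hhi t0.1 t0.2.1 t0.2.2 hdet2).1
  -- Step 3: normalize the sign so the real embedding is positive.
  obtain ⟨s, ε, hε, hsfm, hsx, hsN⟩ :
      ∃ (s : ℤ × ℤ × ℤ) (ε : ℤ), (ε = 1 ∨ ε = -1) ∧ exFm s = ε • B ∧
        0 < exXv α s ∧ (exNv s.1 s.2.1 s.2.2 = 1 ∨ exNv s.1 s.2.1 s.2.2 = -1) := by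
    rcases lt_or_gt_of_ne hx0 with hneg | hpos
    · refine ⟨(-(t0.1), -(t0.2.1), -(t0.2.2)), -1, Or.inr rfl, ?_, ?_, ?_⟩
      · rw [hB]
        ext i j
        fin_cases i <;> fin_cases j <;> simp [exFm] <;> ring
      · have : exXv α (-(t0.1), -(t0.2.1), -(t0.2.2)) = - exXv α t0 := by
          simp only [exXv]; push_cast; ring
        rw [this]; linarith
      · have : exNv (-(t0.1)) (-(t0.2.1)) (-(t0.2.2)) = - exNv t0.1 t0.2.1 t0.2.2 := by
          simp only [exNv]; ring
        rw [this]; omega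
    · exact ⟨t0, 1, Or.inl rfl, by rw [one_smul, hB], hpos, hdet2⟩
  -- Step 4: reduce by a power of `A`.
  obtain ⟨m, hm1, hm2⟩ := exists_mem_Ico_zpow hsx (by linarith : (1:ℝ) < α)
  set t' : ℤ × ℤ × ℤ := (exE ^ (-m)) s with ht'
  have hxt' : exXv α t' = α ^ (-m) * exXv α s :=
    exXv_zpow α hα3 hα0.ne' (-m) s
  have hzm : (0:ℝ) < α ^ (-m) := zpow_pos hα0 _
  have hcancel : α ^ (-m) * α ^ m = 1 := by
    rw [← zpow_add₀ hα0.ne', neg_add_cancel, zpow_zero]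
  have hcancel2 : α ^ (-m) * α ^ (m+1) = α := by
    rw [← zpow_add₀ hα0.ne']
    have : -m + (m + 1) = 1 := by ring
    rw [this, zpow_one]
  have h1t : 1 ≤ exXv α t' := by
    have h := mul_le_mul_of_nonneg_left hm1 hzm.le
    rw [hcancel] at h
    rw [hxt']; exact h
  have h2t : exXv α t' < α := by
    have h := mul_lt_mul_of_pos_left hm2 hzm
    rw [hcancel2] at h
    rw [hxt']; exact h
  have hNt' : exNv t'.1 t'.2.1 t'.2.2 = 1 ∨ exNv t'.1 t'.2.1 t'.2.2 = -1 := by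
    rw [ht', exNv_zpow]; exact hsN
  -- Step 5: the finite check pins down the reduced triple.
  obtain ⟨b1, b2, b3, b4, b5, b6⟩ :=
    (exAnalytic α hα3 hlo hhi t'.1 t'.2.1 t'.2.2 hNt').2 h1t h2t
  have hfin := exFinCheck t'.1 (Finset.mem_Icc.mpr (by omega)) t'.2.1
    (Finset.mem_Icc.mpr (by omega)) t'.2.2 (Finset.mem_Icc.mpr (by omega))
    hNt' b1 b2 b3 b4 b5 b6
  -- Step 6: assemble.
  have hfm' : exFm t' = exFm s * ((ex16A ^ (-m) : (Matrix (Fin 3) (Fin 3) ℤ)ˣ) : Matrix (Fin 3) (Fin 3) ℤ) :=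
    exFm_zpow (-m) s
  have final : ∀ j : ℤ,
      exFm t' = ((ex16A ^ j : (Matrix (Fin 3) (Fin 3) ℤ)ˣ) : Matrix (Fin 3) (Fin 3) ℤ) →
      ∃ (m' : ℤ) (ε' : ℤ), (ε' = 1 ∨ ε' = -1) ∧
        B = ε' • ((ex16A ^ m' : (Matrix (Fin 3) (Fin 3) ℤ)ˣ) : Matrix (Fin 3) (Fin 3) ℤ) := by
    intro j hj
    refine ⟨j + m, ε, hε, ?_⟩
    have h1 : exFm s = ((ex16A ^ (j + m) : (Matrix (Fin 3) (Fin 3) ℤ)ˣ) : Matrix (Fin 3) (Fin 3) ℤ) := by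
      calc exFm s
          = exFm s * ((ex16A ^ (-m) * ex16A ^ m : (Matrix (Fin 3) (Fin 3) ℤ)ˣ) : Matrix (Fin 3) (Fin 3) ℤ) := by
            rw [← _root_.zpow_add, neg_add_cancel, zpow_zero, Units.val_one, mul_one]
        _ = exFm s * ((ex16A ^ (-m) : (Matrix (Fin 3) (Fin 3) ℤ)ˣ) : Matrix (Fin 3) (Fin 3) ℤ)
              * ((ex16A ^ m : (Matrix (Fin 3) (Fin 3) ℤ)ˣ) : Matrix (Fin 3) (Fin 3) ℤ) := by
            rw [Units.val_mul, mul_assoc]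
        _ = exFm t' * ((ex16A ^ m : (Matrix (Fin 3) (Fin 3) ℤ)ˣ) : Matrix (Fin 3) (Fin 3) ℤ) := by
            rw [← hfm']
        _ = ((ex16A ^ j : (Matrix (Fin 3) (Fin 3) ℤ)ˣ) : Matrix (Fin 3) (Fin 3) ℤ)
              * ((ex16A ^ m : (Matrix (Fin 3) (Fin 3) ℤ)ˣ) : Matrix (Fin 3) (Fin 3) ℤ) := by rw [hj]
        _ = ((ex16A ^ (j + m) : (Matrix (Fin 3) (Fin 3) ℤ)ˣ) : Matrix (Fin 3) (Fin 3) ℤ) := by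
            rw [← Units.val_mul, ← _root_.zpow_add]
    have h2 : ε • B = ((ex16A ^ (j + m) : (Matrix (Fin 3) (Fin 3) ℤ)ˣ) : Matrix (Fin 3) (Fin 3) ℤ) := by
      rw [← hsfm, h1]
    rcases hε with rfl | rfl
    · rw [one_smul] at h2 ⊢; exact h2
    · rw [← h2, smul_smul]; norm_num
  -- the four candidates
  have hteta : t' = (t'.1, t'.2.1, t'.2.2) := rfl
  rcases hfin with hc | hc | hc | hc <;> rw [← hteta] at hc
  · refine final (-1) ?_
    rw [hc, _root_.zpow_neg_one]
    decide
  · refine final 0 ?_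
    rw [hc, zpow_zero, Units.val_one]
    decide
  · refine final 1 ?_
    rw [hc, zpow_one]
    decide
  · refine final 2 ?_
    rw [hc, show (2:ℤ) = ((2:ℕ):ℤ) from rfl, zpow_natCast, Units.val_pow_eq_pow_val]
    decide
end

section
/- Let A be the 2×2 integer matrix with rows (18, 5) and (65, 18) (with characteristic polynomial x² − 36x − 1). Then every 2×2 integer matrix B with det B = ±1 and AB = BA is of the form B = ε·A^m for some integer m and some ε ∈ {1, −1}; that is, C(A) = ⟨A⟩ × ⟨−I⟩. -/
open Matrix

/-- The matrix `A = !![18, 5; 65, 18]` (with characteristic polynomial `x² − 36x − 1`) as an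
element of `GL(2, ℤ)`, i.e. a unit of the ring of `2 × 2` integer matrices. -/
def ex18A : (Matrix (Fin 2) (Fin 2) ℤ)ˣ :=
  ⟨!![18, 5; 65, 18], !![-18, 5; 65, -18], by decide, by decide⟩

lemma ex18A_val : (ex18A : Matrix (Fin 2) (Fin 2) ℤ) = !![18, 5; 65, 18] := rfl

/-- Descent lemma: every nonnegative solution of the Pell equation `t² - 13 k² = ±1`
gives a power of `ex18A`. -/
lemma aux18 : ∀ k : ℕ, ∀ t : ℤ, 0 ≤ t →
    (t ^ 2 - 13 * (k : ℤ) ^ 2 = 1 ∨ t ^ 2 - 13 * (k : ℤ) ^ 2 = -1) →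
    ∃ n : ℕ, !![t, (k : ℤ); 13 * (k : ℤ), t]
      = ((ex18A ^ n : (Matrix (Fin 2) (Fin 2) ℤ)ˣ) : Matrix (Fin 2) (Fin 2) ℤ) := by
  intro k
  induction k using Nat.strong_induction_on with
  | _ k ih =>
  intro t ht hnorm
  by_cases hk5 : k < 5
  · -- small cases: only k = 0, t = 1 is possible
    have hkz : (k : ℤ) ≤ 4 := by exact_mod_cast Nat.le_of_lt_succ hk5
    have hkn : (0 : ℤ) ≤ (k : ℤ) := Int.natCast_nonneg k
    rcases Nat.eq_zero_or_pos k with rfl | hkpos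
    · have ht1 : t = 1 := by
        rcases hnorm with h | h <;> push_cast at h
        · nlinarith [sq_nonneg (t - 1), sq_nonneg (t + 1)]
        · nlinarith [sq_nonneg t]
      refine ⟨0, ?_⟩
      subst ht1
      rw [pow_zero, Units.val_one]
      simp [Matrix.one_fin_two]
    · exfalso
      have hb : t < 15 := by
        rcases hnorm with h | h <;>
          nlinarith [mul_nonneg (sub_nonneg.mpr hkz) hkn, sq_nonneg (t - 15)]
      have hk1 : 1 ≤ k := hkpos
      have hk4 : k ≤ 4 := Nat.le_of_lt_succ hk5
      interval_cases k <;> rcases hnorm with h | h <;> interval_cases t <;> norm_num at h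
  · push_neg at hk5
    have hk5' : (5 : ℤ) ≤ (k : ℤ) := by exact_mod_cast hk5
    set t' : ℤ := -18 * t + 65 * (k : ℤ) with ht'def
    set k' : ℤ := 5 * t - 18 * (k : ℤ) with hk'def
    have hk'0 : 0 ≤ k' := by
      rcases hnorm with h | h <;> nlinarith [sq_nonneg (5 * t - 18 * (k:ℤ)), sq_nonneg (5 * t + 18 * (k:ℤ))]
    have hk'lt : k' < (k : ℤ) := by
      rcases hnorm with h | h <;> nlinarith [sq_nonneg (5 * t + 19 * (k:ℤ))]
    have ht'0 : 0 ≤ t' := by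
      rcases hnorm with h | h <;> nlinarith [sq_nonneg (18 * t + 65 * (k:ℤ))]
    have hnorm' : t' ^ 2 - 13 * k' ^ 2 = 1 ∨ t' ^ 2 - 13 * k' ^ 2 = -1 := by
      rcases hnorm with h | h
      · right; rw [ht'def, hk'def]; ring_nf; ring_nf at h; linarith
      · left; rw [ht'def, hk'def]; ring_nf; ring_nf at h; linarith
    have hcast : ((k'.toNat : ℤ)) = k' := Int.toNat_of_nonneg hk'0
    have hlt : k'.toNat < k := by
      have := hk'lt
      omega
    obtain ⟨n, hn⟩ := ih k'.toNat hlt t' ht'0 (by rw [hcast]; exact hnorm')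
    rw [hcast] at hn
    refine ⟨n + 1, ?_⟩
    have hval : ((ex18A ^ (n + 1) : (Matrix (Fin 2) (Fin 2) ℤ)ˣ) : Matrix (Fin 2) (Fin 2) ℤ)
        = !![18, 5; 65, 18] * !![t', k'; 13 * k', t'] := by
      rw [pow_succ', Units.val_mul, ex18A_val, hn]
    rw [hval]
    ext i j
    fin_cases i <;> fin_cases j <;>
      simp [Matrix.mul_apply, Fin.sum_univ_two, ht'def, hk'def] <;> ring

/-- If `B * C = δ • 1` and `C = ex18A ^ n`, then `B = δ • ex18A ^ (-n)`. -/
lemma inv_case18 (B C : Matrix (Fin 2) (Fin 2) ℤ) (δ : ℤ) (n : ℕ)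
    (hC : C = ((ex18A ^ n : (Matrix (Fin 2) (Fin 2) ℤ)ˣ) : Matrix (Fin 2) (Fin 2) ℤ))
    (hBC : B * C = δ • 1) :
    B = δ • ((ex18A ^ (-(n : ℤ)) : (Matrix (Fin 2) (Fin 2) ℤ)ˣ) : Matrix (Fin 2) (Fin 2) ℤ) := by
  rw [_root_.zpow_neg, zpow_natCast]
  calc B = B * (((ex18A ^ n : (Matrix (Fin 2) (Fin 2) ℤ)ˣ) : Matrix (Fin 2) (Fin 2) ℤ)
            * (((ex18A ^ n)⁻¹ : (Matrix (Fin 2) (Fin 2) ℤ)ˣ) : Matrix (Fin 2) (Fin 2) ℤ)) := by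
          rw [← Units.val_mul, mul_inv_cancel, Units.val_one, mul_one]
    _ = (B * C) * (((ex18A ^ n)⁻¹ : (Matrix (Fin 2) (Fin 2) ℤ)ˣ) : Matrix (Fin 2) (Fin 2) ℤ) := by
          rw [hC, mul_assoc]
    _ = δ • ((((ex18A ^ n)⁻¹ : (Matrix (Fin 2) (Fin 2) ℤ)ˣ)) : Matrix (Fin 2) (Fin 2) ℤ) := by
          rw [hBC, smul_mul_assoc, one_mul]

/-- For `A = !![18, 5; 65, 18]`, every `B ∈ GL(2, ℤ)` commuting with `A` is of the form
`B = ε·A^m` with `m ∈ ℤ` and `ε = ±1`; that is, `C(A) = ⟨A⟩ × ⟨−I⟩`. -/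
theorem centralizer_ex18 (B : Matrix (Fin 2) (Fin 2) ℤ)
    (hdet : B.det = 1 ∨ B.det = -1)
    (hcomm : (ex18A : Matrix (Fin 2) (Fin 2) ℤ) * B
      = B * (ex18A : Matrix (Fin 2) (Fin 2) ℤ)) :
    ∃ (m : ℤ) (ε : ℤ), (ε = 1 ∨ ε = -1) ∧
      B = ε • ((ex18A ^ m : (Matrix (Fin 2) (Fin 2) ℤ)ˣ) : Matrix (Fin 2) (Fin 2) ℤ) := by
  set a : ℤ := B 0 0 with ha
  set b : ℤ := B 0 1 with hb
  -- from the commutation relation, B = !![a, b; 13*b, a]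
  have h00 := congrFun (congrFun hcomm 0) 0
  have h01 := congrFun (congrFun hcomm 0) 1
  simp [ex18A_val, Matrix.mul_apply, Fin.sum_univ_two] at h00 h01
  have hc : B 1 0 = 13 * b := by omega
  have hd : B 1 1 = a := by omega
  have hB : B = !![a, b; 13 * b, a] := by
    rw [Matrix.eta_fin_two B, hc, hd]
  have hdet' : a ^ 2 - 13 * b ^ 2 = B.det := by
    rw [hB, Matrix.det_fin_two_of]; ring
  set δ : ℤ := B.det with hδ
  have hdd : a ^ 2 - 13 * b ^ 2 = 1 ∨ a ^ 2 - 13 * b ^ 2 = -1 := hdet' ▸ hdet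
  rcases le_total 0 a with hA | hA <;> rcases le_total 0 b with hBb | hBb
  · -- 0 ≤ a, 0 ≤ b : B = A ^ n
    have hcb : ((b.toNat : ℤ)) = b := Int.toNat_of_nonneg hBb
    obtain ⟨n, hn⟩ := aux18 b.toNat a hA (by rw [hcb]; exact hdd)
    rw [hcb] at hn
    refine ⟨(n : ℤ), 1, Or.inl rfl, ?_⟩
    rw [zpow_natCast, one_smul, hB, hn]
  · -- 0 ≤ a, b ≤ 0 : B = δ • A ^ (-n)
    have hcb : (((-b).toNat : ℤ)) = -b := Int.toNat_of_nonneg (by linarith)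
    obtain ⟨n, hn⟩ := aux18 (-b).toNat a hA (by
      rw [hcb]
      rcases hdd with h | h
      · left; linear_combination h
      · right; linear_combination h)
    rw [hcb] at hn
    have hBC : B * !![a, -b; 13 * -b, a] = δ • 1 := by
      rw [hB]
      ext i j
      fin_cases i <;> fin_cases j <;>
        simp [Matrix.mul_apply, Fin.sum_univ_two, Matrix.one_apply] <;>
        linarith [hdet']
    exact ⟨-(n : ℤ), δ, hdet, inv_case18 B _ δ n hn hBC⟩
  · -- a ≤ 0, 0 ≤ b : B = (-δ) • A ^ (-n)
    have hcb : ((b.toNat : ℤ)) = b := Int.toNat_of_nonneg hBb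
    obtain ⟨n, hn⟩ := aux18 b.toNat (-a) (by linarith) (by
      rw [hcb]
      rcases hdd with h | h
      · left; linear_combination h
      · right; linear_combination h)
    rw [hcb] at hn
    have hBC : B * !![-a, b; 13 * b, -a] = (-δ) • 1 := by
      rw [hB]
      ext i j
      fin_cases i <;> fin_cases j <;>
        simp [Matrix.mul_apply, Fin.sum_univ_two, Matrix.one_apply] <;>
        linarith [hdet']
    refine ⟨-(n : ℤ), -δ, ?_, inv_case18 B _ (-δ) n hn hBC⟩
    rcases hdet with h | h
    · right; rw [h]
    · left; rw [h]; ring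
  · -- a ≤ 0, b ≤ 0 : B = -A ^ n
    have hcb : (((-b).toNat : ℤ)) = -b := Int.toNat_of_nonneg (by linarith)
    obtain ⟨n, hn⟩ := aux18 (-b).toNat (-a) (by linarith) (by
      rw [hcb]
      rcases hdd with h | h
      · left; linear_combination h
      · right; linear_combination h)
    rw [hcb] at hn
    refine ⟨(n : ℤ), -1, Or.inr rfl, ?_⟩
    rw [zpow_natCast, hB, ← hn]
    ext i j
    fin_cases i <;> fin_cases j <;> simp
end

section
/- Let A be the 2×2 integer matrix with rows (2, 5) and (5, 12) (with characteristic polynomial x² − 14x − 1), and let R be the 2×2 integer matrix with rows (0, 1) and (1, 2). Then R³ = A, and every 2×2 integer matrix B with det B = ±1 and AB = BA is of the form B = ε·R^m for some integer m and some ε ∈ {1, −1}; that is, C(A) = ⟨R⟩ × ⟨−I⟩, which strictly contains ⟨A⟩ × ⟨−I⟩. -/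
open Matrix

/-- The matrix `A = !![2, 5; 5, 12]` (with characteristic polynomial `x² − 14x − 1`) as an
element of `GL(2, ℤ)`, i.e. a unit of the ring of `2 × 2` integer matrices. -/
def ex19A : (Matrix (Fin 2) (Fin 2) ℤ)ˣ :=
  ⟨!![2, 5; 5, 12], !![-12, 5; 5, -2], by decide, by decide⟩

/-- The matrix `R = !![0, 1; 1, 2]` as an element of `GL(2, ℤ)`. -/
def ex19R : (Matrix (Fin 2) (Fin 2) ℤ)ˣ :=
  ⟨!![0, 1; 1, 2], !![-2, 1; 1, 0], by decide, by decide⟩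

lemma ex19key : ∀ n : ℕ, ∀ a b : ℤ, b.natAbs = n →
    (a^2 + 2*a*b - b^2 = 1 ∨ a^2 + 2*a*b - b^2 = -1) →
    ∃ (m : ℤ) (ε : ℤ), (ε = 1 ∨ ε = -1) ∧
      !![a, b; b, a + 2*b] = ε • ((ex19R ^ m : (Matrix (Fin 2) (Fin 2) ℤ)ˣ) : Matrix (Fin 2) (Fin 2) ℤ) := by
  intro n
  induction n using Nat.strong_induction_on with
  | _ n ih =>
    intro a b hb hN
    rcases eq_or_ne b 0 with hb0 | hb0
    · subst hb0
      have ha : a = 1 ∨ a = -1 := by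
        refine Int.isUnit_iff.mp (IsUnit.of_mul_eq_one (a := a) a ?_)
        rcases hN with h | h
        · nlinarith
        · nlinarith [sq_nonneg a]
      refine ⟨0, a, ha, ?_⟩
      simp only [zpow_zero, Units.val_one]
      ext i j
      fin_cases i <;> fin_cases j <;>
        rcases ha with h | h <;> subst h <;>
        simp [Matrix.one_apply]
    · have hbsq : (1:ℤ) ≤ b^2 := by have h0 : 0 < b^2 := by positivity
                                    linarith
      have hu2 : (a+b)^2 = 2*b^2 + 1 ∨ (a+b)^2 = 2*b^2 - 1 := by
        rcases hN with h | h
        · left; linear_combination h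
        · right; linear_combination h
      have hub : b^2 ≤ (a+b)^2 := by rcases hu2 with h | h <;> nlinarith
      have hub2 : (a+b)^2 < 4*b^2 := by rcases hu2 with h | h <;> nlinarith
      rcases lt_trichotomy ((a+b)*b) 0 with hs | hs | hs
      · -- opposite signs: pair (b, a+2b), B' = B * R
        have hlt : (a+2*b)^2 < b^2 := by nlinarith [sq_nonneg ((a+b)*b), hub, hub2, hs]
        have hn' : (a+2*b).natAbs < n := by
          rw [← hb]; exact Int.natAbs_lt_iff_sq_lt.mpr hlt
        have hN' : b^2 + 2*b*(a+2*b) - (a+2*b)^2 = 1 ∨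
            b^2 + 2*b*(a+2*b) - (a+2*b)^2 = -1 := by
          rcases hN with h | h
          · right; linear_combination -h
          · left; linear_combination -h
        obtain ⟨m, ε, hε, hB'⟩ := ih _ hn' b (a+2*b) rfl hN'
        refine ⟨m - 1, ε, hε, ?_⟩
        have hrel : !![b, a+2*b; a+2*b, b + 2*(a+2*b)] =
            !![a, b; b, a + 2*b] * (ex19R : Matrix (Fin 2) (Fin 2) ℤ) := by
          show _ = _ * !![0,1;1,2]
          rw [Matrix.mul_fin_two]; ext i j; fin_cases i <;> fin_cases j <;> simp <;> ring
        have h2 : !![a, b; b, a + 2*b] * (ex19R : Matrix (Fin 2) (Fin 2) ℤ)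
            = ε • ((ex19R ^ m : (Matrix (Fin 2) (Fin 2) ℤ)ˣ) : Matrix (Fin 2) (Fin 2) ℤ) := by
          rw [← hrel]; exact hB'
        have h3 := congrArg (fun M => M * ((ex19R⁻¹ : (Matrix (Fin 2) (Fin 2) ℤ)ˣ) : Matrix (Fin 2) (Fin 2) ℤ)) h2
        simp only [Matrix.mul_assoc, ← Units.val_mul, mul_inv_cancel, Units.val_one,
          Matrix.mul_one, Matrix.smul_mul] at h3
        rw [h3, ← _root_.zpow_sub_one]
      · rcases mul_eq_zero.mp hs with h | h
        · nlinarith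
        · exact absurd h hb0
      · -- same signs: pair (b - 2a, a), B = B' * R
        have hlt : a^2 < b^2 := by nlinarith [hub, hub2, hs]
        have hn' : a.natAbs < n := by rw [← hb]; exact Int.natAbs_lt_iff_sq_lt.mpr hlt
        have hN' : (b-2*a)^2 + 2*(b-2*a)*a - a^2 = 1 ∨
            (b-2*a)^2 + 2*(b-2*a)*a - a^2 = -1 := by
          rcases hN with h | h
          · right; linear_combination -h
          · left; linear_combination -h
        obtain ⟨m, ε, hε, hB'⟩ := ih _ hn' (b-2*a) a rfl hN'
        refine ⟨m + 1, ε, hε, ?_⟩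
        have hrel : !![a, b; b, a + 2*b] =
            !![b-2*a, a; a, (b-2*a) + 2*a] * (ex19R : Matrix (Fin 2) (Fin 2) ℤ) := by
          show _ = _ * !![0,1;1,2]
          rw [Matrix.mul_fin_two]; ext i j; fin_cases i <;> fin_cases j <;> simp <;> ring
        rw [hrel, hB', Matrix.smul_mul, ← Units.val_mul, ← _root_.zpow_add_one]

/-- For `A = !![2, 5; 5, 12]` and `R = !![0, 1; 1, 2]`: `R³ = A`, every `B ∈ GL(2, ℤ)`
commuting with `A` is of the form `B = ε·R^m` with `m ∈ ℤ` and `ε = ±1` (that is,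
`C(A) = ⟨R⟩ × ⟨−I⟩`), and this strictly contains `⟨A⟩ × ⟨−I⟩`: some `B ∈ GL(2, ℤ)`
commuting with `A` is not of the form `ε·A^m`. -/
theorem centralizer_ex19 :
    (ex19R : Matrix (Fin 2) (Fin 2) ℤ) ^ 3 = (ex19A : Matrix (Fin 2) (Fin 2) ℤ) ∧
    (∀ B : Matrix (Fin 2) (Fin 2) ℤ, (B.det = 1 ∨ B.det = -1) →
      (ex19A : Matrix (Fin 2) (Fin 2) ℤ) * B = B * (ex19A : Matrix (Fin 2) (Fin 2) ℤ) →
      ∃ (m : ℤ) (ε : ℤ), (ε = 1 ∨ ε = -1) ∧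
        B = ε • ((ex19R ^ m : (Matrix (Fin 2) (Fin 2) ℤ)ˣ) : Matrix (Fin 2) (Fin 2) ℤ)) ∧
    (∃ B : Matrix (Fin 2) (Fin 2) ℤ, (B.det = 1 ∨ B.det = -1) ∧
      (ex19A : Matrix (Fin 2) (Fin 2) ℤ) * B = B * (ex19A : Matrix (Fin 2) (Fin 2) ℤ) ∧
      ∀ (m : ℤ) (ε : ℤ), (ε = 1 ∨ ε = -1) →
        B ≠ ε • ((ex19A ^ m : (Matrix (Fin 2) (Fin 2) ℤ)ˣ) : Matrix (Fin 2) (Fin 2) ℤ)) := by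
  refine ⟨by decide, ?_, ?_⟩
  · intro B hdet hcomm
    have hB : B = !![B 0 0, B 0 1; B 1 0, B 1 1] := Matrix.eta_fin_two B
    have hcomm' : (!![2,5;5,12] : Matrix (Fin 2) (Fin 2) ℤ) * B = B * !![2,5;5,12] := hcomm
    rw [hB, Matrix.mul_fin_two, Matrix.mul_fin_two] at hcomm'
    have h01 := congrFun (congrFun hcomm' 0) 1
    have h10 := congrFun (congrFun hcomm' 1) 0
    simp at h01 h10
    have hc : B 1 0 = B 0 1 := by linarith
    have hd : B 1 1 = B 0 0 + 2 * B 0 1 := by linarith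
    rw [hB, Matrix.det_fin_two_of, hc, hd] at hdet
    have hN : (B 0 0)^2 + 2*(B 0 0)*(B 0 1) - (B 0 1)^2 = 1 ∨
        (B 0 0)^2 + 2*(B 0 0)*(B 0 1) - (B 0 1)^2 = -1 := by
      rcases hdet with h | h
      · left; linear_combination h
      · right; linear_combination h
    obtain ⟨m, ε, hε, heq⟩ := ex19key (B 0 1).natAbs (B 0 0) (B 0 1) rfl hN
    refine ⟨m, ε, hε, ?_⟩
    rw [hB, hc, hd]
    exact heq
  · refine ⟨!![0,1;1,2], Or.inr (by decide), by decide, ?_⟩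
    intro m ε hε h
    let f : Matrix (Fin 2) (Fin 2) ℤ →+* Matrix (Fin 2) (Fin 2) (ZMod 7) :=
      (Int.castRingHom (ZMod 7)).mapMatrix
    let u : (Matrix (Fin 2) (Fin 2) (ZMod 7))ˣ := Units.map f.toMonoidHom ex19A
    have hu2 : u ^ (2:ℤ) = 1 := by
      ext : 1
      show ((u ^ (2:ℤ) : _ˣ) : Matrix (Fin 2) (Fin 2) (ZMod 7)) = 1
      rw [show (2:ℤ) = ((2:ℕ):ℤ) from rfl, zpow_natCast, Units.val_pow_eq_pow_val]
      show ((f ex19A.val) ^ 2 : Matrix (Fin 2) (Fin 2) (ZMod 7)) = 1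
      decide
    have hfm : f ((ex19A ^ m : (Matrix (Fin 2) (Fin 2) ℤ)ˣ) : Matrix (Fin 2) (Fin 2) ℤ)
        = ((u ^ m : _ˣ) : Matrix (Fin 2) (Fin 2) (ZMod 7)) := by
      rw [← map_zpow (Units.map f.toMonoidHom) ex19A m]
      rfl
    have hmod : u ^ m = u ^ (m % 2) := by
      conv_lhs => rw [← Int.emod_add_mul_ediv m 2]
      rw [_root_.zpow_add, _root_.zpow_mul, hu2, _root_.one_zpow, mul_one]
    have hm2 : m % 2 = 0 ∨ m % 2 = 1 := Int.emod_two_eq_zero_or_one m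
    have hum : ((u ^ m : _ˣ) : Matrix (Fin 2) (Fin 2) (ZMod 7)) = 1 ∨
        ((u ^ m : _ˣ) : Matrix (Fin 2) (Fin 2) (ZMod 7)) = f ex19A.val := by
      rcases hm2 with h2 | h2
      · left; rw [hmod, h2, zpow_zero, Units.val_one]
      · right; rw [hmod, h2, zpow_one]; rfl
    have h7 := congrArg f h
    rcases hε with hε | hε <;> subst hε
    · rw [one_smul, hfm] at h7
      rcases hum with h1 | h1 <;> rw [h1] at h7 <;> revert h7 <;> decide
    · rw [neg_smul, one_smul, map_neg, hfm] at h7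
      rcases hum with h1 | h1 <;> rw [h1] at h7 <;> revert h7 <;> decide
end
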